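/- arXiv:2008.02975 — 14 statements merged into one kernel-verified Lean document; each statement's English description precedes it below -/
import Mathlib

section
/- Let G be a finite simple graph of order n ≥ 2 with no isolated vertices, and let S be a dominating set of the middle graph M(G). Then there exists a dominating set S' of M(G) consisting only of vertices of M(G) that correspond to edges of G, with |S'| ≤ |S|. -/
/-- `S` is a dominating set of the graph `H`. -/
def IsDomSet {V : Type*} (H : SimpleGraph V) (S : Set V) : Prop :=
  ∀ v : V, v ∈ S ∨ ∃ s ∈ S, H.Adj v s

/-- The domination number of a graph `H`. -/
noncomputable def domNum {V : Type*} (H : SimpleGraph V) : ℕ :=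
  sInf {k : ℕ | ∃ S : Set V, IsDomSet H S ∧ S.ncard = k}

/-- The middle graph `M(G)` of a graph `G`: its vertices are the vertices and edges
of `G`; a vertex is adjacent to the edges incident to it, and two edges are adjacent
iff they are distinct and share an endpoint. -/
def middleGraph {V : Type*} (G : SimpleGraph V) : SimpleGraph (V ⊕ G.edgeSet) where
  Adj x y :=
    match x, y with
    | Sum.inl _, Sum.inl _ => False
    | Sum.inl v, Sum.inr e => v ∈ (e : Sym2 V)
    | Sum.inr e, Sum.inl v => v ∈ (e : Sym2 V)
    | Sum.inr e, Sum.inr f => e ≠ f ∧ ∃ v, v ∈ (e : Sym2 V) ∧ v ∈ (f : Sym2 V)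
  symm := by
    constructor
    rintro (v | e) (w | f) h
    · exact h.elim
    · exact h
    · exact h
    · exact ⟨Ne.symm h.1, h.2.imp fun v hv => ⟨hv.2, hv.1⟩⟩
  loopless := by
    constructor
    rintro (v | e) h
    · exact h.elim
    · exact h.1 rfl

/-- If `G` is a graph of order `n ≥ 2` without isolated vertices and `S` is a
dominating set of the middle graph `M(G)`, then there is a dominating set `S'` of `M(G)`
consisting only of vertices of `M(G)` corresponding to edges of `G`, with `|S'| ≤ |S|`. -/
theorem middle_dominating_set_of_edges {V : Type*} [Fintype V] (G : SimpleGraph V) (n : ℕ)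
    (hord : Fintype.card V = n) (hn : 2 ≤ n)
    (hiso : ∀ v : V, ∃ w : V, G.Adj v w)
    (S : Set (V ⊕ G.edgeSet)) (hS : IsDomSet (middleGraph G) S) :
    ∃ S' : Set (V ⊕ G.edgeSet),
      (∀ x ∈ S', ∃ e : G.edgeSet, x = Sum.inr e) ∧
      IsDomSet (middleGraph G) S' ∧ S'.ncard ≤ S.ncard := by
  classical
  -- for each vertex, pick an incident edge
  have hedge : ∀ v : V, ∃ e : G.edgeSet, v ∈ (e : Sym2 V) := by
    intro v
    obtain ⟨w, hw⟩ := hiso v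
    exact ⟨⟨s(v, w), hw⟩, Sym2.mem_mk_left v w⟩
  choose ev hev using hedge
  set f : V ⊕ G.edgeSet → V ⊕ G.edgeSet := fun x =>
    match x with
    | Sum.inl v => Sum.inr (ev v)
    | Sum.inr e => Sum.inr e with hf
  refine ⟨f '' S, ?_, ?_, ?_⟩
  · rintro x ⟨y, _, rfl⟩
    rcases y with v | e
    · exact ⟨ev v, rfl⟩
    · exact ⟨e, rfl⟩
  · intro y
    rcases hS y with hy | ⟨s, hsS, hadj⟩
    · -- y ∈ S
      rcases y with w | e
      · exact Or.inr ⟨Sum.inr (ev w), ⟨Sum.inl w, hy, rfl⟩, hev w⟩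
      · exact Or.inl ⟨Sum.inr e, hy, rfl⟩
    · rcases s with v | e
      · -- s = inl v, so y adjacent to v
        rcases y with w | e
        · exact absurd hadj id
        · -- y = inr e, adj means v ∈ e
          have hve : v ∈ (e : Sym2 V) := hadj
          by_cases heq : e = ev v
          · exact Or.inl ⟨Sum.inl v, hsS, by simp [hf, heq]⟩
          · exact Or.inr ⟨Sum.inr (ev v), ⟨Sum.inl v, hsS, rfl⟩, heq, v, hve, hev v⟩
      · exact Or.inr ⟨Sum.inr e, ⟨Sum.inr e, hsS, rfl⟩, hadj⟩
  · exact Set.ncard_image_le S.toFinite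
end

section
/- Let T be a finite tree on n ≥ 2 vertices. Then ⌈n/2⌉ ≤ γ(M(T)) ≤ n − 1, where γ denotes the domination number. -/
/-- For a tree `T` on `n ≥ 2` vertices, `⌈n/2⌉ ≤ γ(M(T)) ≤ n - 1`. -/
theorem domNum_middle_tree_bounds {V : Type*} [Fintype V] (T : SimpleGraph V) (n : ℕ)
    (hord : Fintype.card V = n) (hn : 2 ≤ n) (hT : T.IsTree) :
    (n + 1) / 2 ≤ domNum (middleGraph T) ∧ domNum (middleGraph T) ≤ n - 1 := by
  classical
  haveI : Fintype T.edgeSet := Fintype.ofFinite _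
  -- every vertex has a neighbor
  have hadjex : ∀ v : V, ∃ w, T.Adj v w := by
    intro v
    obtain ⟨w, hw⟩ := Fintype.exists_ne_of_one_lt_card (by omega) v
    obtain ⟨p⟩ := hT.isConnected.preconnected v w
    cases p with
    | nil => exact absurd rfl hw.symm
    | cons h q => exact ⟨_, h⟩
  -- the set of all edges is dominating
  have hmem : (n - 1) ∈ {k : ℕ | ∃ S : Set (V ⊕ T.edgeSet),
      IsDomSet (middleGraph T) S ∧ S.ncard = k} := by
    refine ⟨Set.range Sum.inr, ?_, ?_⟩
    · rintro (v | e)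
      · right
        obtain ⟨w, hw⟩ := hadjex v
        exact ⟨Sum.inr ⟨s(v, w), hw⟩, ⟨_, rfl⟩, Sym2.mem_mk_left v w⟩
      · left; exact ⟨e, rfl⟩
    · rw [← Nat.card_coe_set_eq, Nat.card_range_of_injective Sum.inr_injective,
        Nat.card_eq_fintype_card, ← Set.toFinset_card]
      have := hT.card_edgeFinset
      have he : (T.edgeSet).toFinset = T.edgeFinset := rfl
      rw [he]
      omega
  -- lower bound for every dominating set
  have hlow : ∀ k ∈ {k : ℕ | ∃ S : Set (V ⊕ T.edgeSet),
      IsDomSet (middleGraph T) S ∧ S.ncard = k}, (n + 1) / 2 ≤ k := by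
    rintro k ⟨S, hS, rfl⟩
    have key : ∀ v : V, ∃ s ∈ S,
        s = Sum.inl v ∨ ∃ e : T.edgeSet, s = Sum.inr e ∧ v ∈ (e : Sym2 V) := by
      intro v
      rcases hS (Sum.inl v) with h | ⟨s, hsS, hadj⟩
      · exact ⟨_, h, Or.inl rfl⟩
      · cases s with
        | inl w => exact hadj.elim
        | inr e => exact ⟨_, hsS, Or.inr ⟨e, rfl, hadj⟩⟩
    choose F hFS hFc using key
    have hfin : S.Finite := Set.toFinite S
    have hcard : Fintype.card V ≤ 2 * hfin.toFinset.card := by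
      refine Finset.card_le_mul_card_image_of_maps_to
        (f := F) (fun v _ => hfin.mem_toFinset.2 (hFS v)) 2 ?_
      rintro (w | e) _
      · refine le_trans (Finset.card_le_card (t := {w}) ?_) (by simp)
        intro v hv
        simp only [Finset.mem_filter, Finset.mem_univ, true_and] at hv
        rcases hFc v with h | ⟨e, he, _⟩
        · rw [h] at hv
          simpa using hv
        · rw [he] at hv; exact absurd hv (by simp)
      · obtain ⟨a, c, hac⟩ : ∃ a c, (e : Sym2 V) = s(a, c) := by
          induction (e : Sym2 V) using Sym2.ind with
          | _ x y => exact ⟨x, y, rfl⟩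
        refine le_trans (Finset.card_le_card (t := {a, c}) ?_) ?_
        · intro v hv
          simp only [Finset.mem_filter, Finset.mem_univ, true_and] at hv
          rcases hFc v with h | ⟨f, hf, hvf⟩
          · rw [h] at hv; exact absurd hv (by simp)
          · rw [hf] at hv
            have : f = e := by simpa using hv
            rw [this, hac] at hvf
            simpa using hvf
        · exact le_trans (Finset.card_insert_le _ _) (by simp)
    have hnc : S.ncard = hfin.toFinset.card := Set.ncard_eq_toFinset_card S hfin
    omega
  have hne : Set.Nonempty {k : ℕ | ∃ S : Set (V ⊕ T.edgeSet),
      IsDomSet (middleGraph T) S ∧ S.ncard = k} := ⟨_, hmem⟩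
  exact ⟨hlow _ (Nat.sInf_mem hne), Nat.sInf_le hmem⟩
end

section
/- Let T be a finite tree of order n ≥ 4 whose diameter equals 3. Then γ(M(T)) = n − 2, where γ denotes the domination number. -/
section Helpers
open SimpleGraph
variable {V : Type*} {T : SimpleGraph V}


lemma tree_path_length (hT : T.IsTree) {a b : V} (p : T.Walk a b) (hp : p.IsPath) :
    p.length = T.dist a b := by
  classical
  obtain ⟨q, hq⟩ := Reachable.exists_walk_length_eq_dist (hT.isConnected a b)
  have h1 : q.bypass.IsPath := q.bypass_isPath
  have h2 : p = q.bypass := ((hT.existsUnique_path a b).unique hp h1)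
  have h3 : T.dist a b ≤ q.bypass.length := T.dist_le _
  have h4 : q.bypass.length ≤ q.length := q.length_bypass_le
  rw [h2]; omega

lemma isPath_append_one {a b c : V} (p : T.Walk a b) (hp : p.IsPath) (h : T.Adj b c)
    (hc : c ∉ p.support) : (p.append (Walk.cons h Walk.nil)).IsPath := by
  rw [Walk.isPath_def, Walk.support_append]
  simp only [Walk.support_cons, Walk.support_nil, List.tail_cons]
  rw [List.nodup_append]
  refine ⟨hp.support_nodup, by simp, ?_⟩
  intro z hz w hz' hzw; subst hzw
  simp at hz'
  subst hz'
  exact hc hz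

lemma isPath_append_two {a b c d : V} (p : T.Walk a b) (hp : p.IsPath) (h1 : T.Adj b c)
    (h2 : T.Adj c d) (hc : c ∉ p.support) (hd : d ∉ p.support) (hcd : c ≠ d) :
    (p.append (Walk.cons h1 (Walk.cons h2 Walk.nil))).IsPath := by
  rw [Walk.isPath_def, Walk.support_append]
  simp only [Walk.support_cons, Walk.support_nil, List.tail_cons]
  rw [List.nodup_append]
  refine ⟨hp.support_nodup, by simp [hcd], ?_⟩
  intro z hz w hz' hzw; subst hzw
  simp at hz'
  rcases hz' with rfl | rfl
  · exact hc hz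
  · exact hd hz

lemma tree_dist_split (hT : T.IsTree) {a b c : V} (p : T.Walk a b) (hp : p.IsPath)
    (h : c ∈ p.support) [DecidableEq V] : T.dist a b = T.dist a c + T.dist c b := by
  have hQ := hp.takeUntil h
  have hR := hp.dropUntil h
  have e1 := tree_path_length hT _ hQ
  have e2 := tree_path_length hT _ hR
  have e3 := tree_path_length hT p hp
  have : ((p.takeUntil c h).append (p.dropUntil c h)).length = p.length := by
    rw [Walk.take_spec]
  rw [Walk.length_append] at this
  omega

lemma end_not_mem_takeUntil {a b c : V} (p : T.Walk a b) (hp : p.IsPath) (h : c ∈ p.support)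
    (hcb : c ≠ b) [DecidableEq V] : b ∉ (p.takeUntil c h).support := by
  have hs : (p.takeUntil c h).support ++ (p.dropUntil c h).support.tail = p.support := by
    rw [← Walk.support_append, Walk.take_spec]
  have hnd : p.support.Nodup := hp.support_nodup
  rw [← hs] at hnd
  have hb : b ∈ (p.dropUntil c h).support.tail := by
    have := (p.dropUntil c h).end_mem_support
    rw [Walk.support_eq_cons, List.mem_cons] at this
    rcases this with h' | h'
    · exact absurd h'.symm hcb
    · exact h'
  intro hmem
  exact (List.disjoint_of_nodup_append hnd) hmem hb

lemma two_paths_absurd (hT : T.IsTree) {a b : V} (p q : T.Walk a b) (hp : p.IsPath)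
    (hq : q.IsPath) : p = q := (hT.existsUnique_path a b).unique hp hq

lemma leaf_unique (hT : T.IsTree) {x y : V} (hxy : T.Adj x y)
    (hstr : ∀ w, w ≠ x → w ≠ y → (T.Adj w x ∨ T.Adj w y)) {w : V} (hwx : w ≠ x) (hwy : w ≠ y)
    {z z' : V} (hz : T.Adj w z) (hz' : T.Adj w z') : z = z' := by
  have hxyne : x ≠ y := hxy.ne
  -- not adjacent to both x and y
  have hD : ¬(T.Adj w x ∧ T.Adj w y) := by
    rintro ⟨ha, hb⟩
    have := two_paths_absurd hT (Walk.cons hb Walk.nil) (Walk.cons ha (Walk.cons hxy Walk.nil))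
      (by rw [Walk.isPath_def]; simp [hwy]) (by rw [Walk.isPath_def]; simp [hwx, hwy, hxyne])
    have := congrArg Walk.length this
    simp at this
  -- every neighbor is x or y
  have hC : ∀ t, T.Adj w t → t = x ∨ t = y := by
    intro t ht
    by_contra hcon
    push_neg at hcon
    obtain ⟨htx, hty⟩ := hcon
    have hwt : w ≠ t := ht.ne
    rcases hstr t htx hty with h1 | h1 <;> rcases hstr w hwx hwy with h2 | h2
    · -- Adj t x, Adj w x : two paths w → x
      have := two_paths_absurd hT (Walk.cons h2 Walk.nil) (Walk.cons ht (Walk.cons h1 Walk.nil))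
        (by rw [Walk.isPath_def]; simp [hwx]) (by rw [Walk.isPath_def]; simp [hwt, hwx, htx])
      have := congrArg Walk.length this
      simp at this
    · -- Adj t x, Adj w y : paths y → t : y-w-t vs y-x-t
      have heq := two_paths_absurd hT (Walk.cons h2.symm (Walk.cons ht Walk.nil))
        (Walk.cons hxy.symm (Walk.cons h1.symm Walk.nil))
        (by rw [Walk.isPath_def]; simp [hwy.symm, hty.symm, hwt])
        (by rw [Walk.isPath_def]; simp [hxyne.symm, hty.symm, htx.symm])
      have := congrArg Walk.support heq
      simp at this
      exact hwx this
    · -- Adj t y, Adj w x : paths x → t : x-w-t vs x-y-t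
      have heq := two_paths_absurd hT (Walk.cons h2.symm (Walk.cons ht Walk.nil))
        (Walk.cons hxy (Walk.cons h1.symm Walk.nil))
        (by rw [Walk.isPath_def]; simp [hwx.symm, htx.symm, hwt])
        (by rw [Walk.isPath_def]; simp [hxyne, htx.symm, hty.symm])
      have := congrArg Walk.support heq
      simp at this
      exact hwy this
    · -- Adj t y, Adj w y : two paths w → y
      have := two_paths_absurd hT (Walk.cons h2 Walk.nil) (Walk.cons ht (Walk.cons h1 Walk.nil))
        (by rw [Walk.isPath_def]; simp [hwy]) (by rw [Walk.isPath_def]; simp [hwt, hwy, hty])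
      have := congrArg Walk.length this
      simp at this
  rcases hC z hz with rfl | rfl <;> rcases hC z' hz' with rfl | rfl
  · rfl
  · exact absurd ⟨hz, hz'⟩ hD
  · exact absurd ⟨hz', hz⟩ hD
  · rfl

lemma double_star [Nonempty V] (hT : T.IsTree) (hdiam : T.diam = 3) :
    ∃ x y u v : V, T.Adj x y ∧ T.Adj u x ∧ T.Adj v y ∧ u ≠ x ∧ u ≠ y ∧ v ≠ x ∧ v ≠ y ∧
      ∀ w, w ≠ x → w ≠ y → (T.Adj w x ∨ T.Adj w y) := by
  classical
  obtain ⟨u, v, huv⟩ := T.exists_dist_eq_diam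
  rw [hdiam] at huv
  have hdle : ∀ a b : V, T.dist a b ≤ 3 := by
    intro a b
    have := T.dist_le_diam (ediam_ne_top_of_diam_ne_zero (by rw [hdiam]; norm_num)) (u := a) (v := b)
    omega
  obtain ⟨p, hp⟩ := T.exists_walk_of_dist_ne_zero (u := u) (v := v) (by omega)
  have hqp : p.bypass.IsPath := p.bypass_isPath
  have hql : p.bypass.length = 3 := by
    rw [tree_path_length hT _ hqp, huv]
  set q := p.bypass with hq
  clear_value q
  clear hq hp
  cases q with
  | nil => simp at hql
  | cons h1 q1 =>
    cases q1 with
    | nil => simp at hql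
    | cons h2 q2 =>
      cases q2 with
      | nil => simp at hql
      | cons h3 q3 =>
        cases q3 with
        | nil =>
          rename_i x y
          clear hql
          rw [Walk.isPath_def] at hqp
          simp only [Walk.support_cons, Walk.support_nil] at hqp
          simp only [List.nodup_cons, List.mem_cons, List.mem_singleton, List.not_mem_nil,
            or_false, List.nodup_nil, and_true, List.mem_nil_iff] at hqp
          push_neg at hqp
          have hux : u ≠ x := by tauto
          have huy : u ≠ y := by tauto
          have huv' : u ≠ v := by tauto
          have hxy : x ≠ y := by tauto
          have hxv : x ≠ v := by tauto
          have hyv : y ≠ v := by tauto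
          -- distances
          have dxv : T.dist x v = 2 := by
            have : (Walk.cons h2 (Walk.cons h3 Walk.nil) : T.Walk x v).IsPath := by
              rw [Walk.isPath_def]; simp [hxy, hxv, hyv]
            simpa using (tree_path_length hT _ this).symm
          have duy : T.dist u y = 2 := by
            have : (Walk.cons h1 (Walk.cons h2 Walk.nil) : T.Walk u y).IsPath := by
              rw [Walk.isPath_def]; simp [hux, huy, hxy]
            simpa using (tree_path_length hT _ this).symm
          refine ⟨x, y, u, v, h2, h1, h3.symm, hux, huy, hxv.symm, hyv.symm, ?_⟩
          intro w hwx hwy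
          obtain ⟨P, hP, -⟩ := hT.existsUnique_path w x
          by_cases hy : y ∈ P.support
          · right
            have hrel : T.dist w x = T.dist w y + 1 := by
              rw [tree_dist_split hT P hP hy, dist_eq_one_iff_adj.mpr h2.symm]
            have hQ : (P.takeUntil y hy).IsPath := hP.takeUntil hy
            have hQlen : (P.takeUntil y hy).length = T.dist w y :=
              tree_path_length hT _ hQ
            have hxQ : x ∉ (P.takeUntil y hy).support :=
              end_not_mem_takeUntil P hP hy hxy.symm
            have huQ : u ∉ (P.takeUntil y hy).support := by
              intro hu
              have hsplit : T.dist w y = T.dist w u + T.dist u y :=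
                tree_dist_split hT _ hQ hu
              have hle : T.dist w x ≤ T.dist w u + 1 := by
                have h5 := T.dist_le (((P.takeUntil y hy).takeUntil u hu).append
                  (Walk.cons h1 Walk.nil))
                rw [Walk.length_append] at h5
                have hl : ((P.takeUntil y hy).takeUntil u hu).length = T.dist w u :=
                  tree_path_length hT _ (hQ.takeUntil hu)
                simp only [Walk.length_cons, Walk.length_nil] at h5
                omega
              omega
            have hW := isPath_append_two _ hQ h2.symm h1.symm hxQ huQ (Ne.symm hux)
            have hWlen := tree_path_length hT _ hW
            rw [Walk.length_append] at hWlen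
            simp only [Walk.length_cons, Walk.length_nil] at hWlen
            have h6 : T.dist w u ≤ 3 := hdle w u
            have hdy : T.dist w y = 1 := by
              have hz : T.dist w y ≠ 0 := fun h0 => hwy (hT.isConnected.dist_eq_zero_iff.mp h0)
              omega
            exact dist_eq_one_iff_adj.mp hdy
          · left
            have hPlen : P.length = T.dist w x := tree_path_length hT P hP
            have hvP : v ∉ P.support := by
              intro hv
              have hsplit : T.dist w x = T.dist w v + T.dist v x :=
                tree_dist_split hT P hP hv
              have hvx : T.dist v x = 2 := by rw [dist_comm]; exact dxv
              have hle : T.dist w y ≤ T.dist w v + 1 := by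
                have h5 := T.dist_le ((P.takeUntil v hv).append (Walk.cons h3.symm Walk.nil))
                rw [Walk.length_append] at h5
                have hl : (P.takeUntil v hv).length = T.dist w v :=
                  tree_path_length hT _ (hP.takeUntil hv)
                simp only [Walk.length_cons, Walk.length_nil] at h5
                omega
              have hP' := isPath_append_one P hP h2 hy
              have h7 := tree_path_length hT _ hP'
              rw [Walk.length_append] at h7
              simp only [Walk.length_cons, Walk.length_nil] at h7
              omega
            have hW := isPath_append_two P hP h2 h3 hy hvP hyv
            have hWlen := tree_path_length hT _ hW
            rw [Walk.length_append] at hWlen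
            simp only [Walk.length_cons, Walk.length_nil] at hWlen
            have h6 : T.dist w v ≤ 3 := hdle w v
            have hdx : T.dist w x = 1 := by
              have hz : T.dist w x ≠ 0 := fun h0 => hwx (hT.isConnected.dist_eq_zero_iff.mp h0)
              omega
            exact dist_eq_one_iff_adj.mp hdx
        | cons h4 q4 => simp at hql

end Helpers

open SimpleGraph in
/-- For a tree `T` of order `n ≥ 4` with diameter `3`, `γ(M(T)) = n - 2`. -/
theorem domNum_middle_tree_diam_three {V : Type*} [Fintype V] (T : SimpleGraph V) (n : ℕ)
    (hord : Fintype.card V = n) (hn : 4 ≤ n) (hT : T.IsTree) (hdiam : T.diam = 3) :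
    domNum (middleGraph T) = n - 2 := by
  classical
  haveI : Nonempty V := Fintype.card_pos_iff.mp (by omega)
  obtain ⟨x, y, u, v, hxy, hux, hvy, huxne, huyne, hvxne, hvyne, hstr⟩ := double_star hT hdiam
  set L : Set V := {w | w ≠ x ∧ w ≠ y} with hLdef
  -- the canonical neighbor of each leaf
  set c : V → V := fun w => if T.Adj w x then x else y with hcdef
  have hcadj : ∀ w, w ≠ x → w ≠ y → T.Adj w (c w) := by
    intro w h1 h2
    simp only [hcdef]
    split
    · assumption
    · rcases hstr w h1 h2 with h | h
      · tauto
      · exact h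
  have hcxy : ∀ w, c w = x ∨ c w = y := by
    intro w; simp only [hcdef]; split <;> simp
  have hcall : ∀ w, w ≠ x → w ≠ y → ∀ z, T.Adj w z → z = c w := fun w h1 h2 z hz =>
    leaf_unique hT hxy hstr h1 h2 hz (hcadj w h1 h2)
  have hcu : c u = x := (hcall u huxne huyne x hux).symm
  have hcv : c v = y := (hcall v hvxne hvyne y hvy).symm
  -- the pendant-edge map
  set f : V → V ⊕ T.edgeSet := fun w =>
    if h : w ≠ x ∧ w ≠ y then Sum.inr ⟨s(w, c w), T.mem_edgeSet.mpr (hcadj w h.1 h.2)⟩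
    else Sum.inl x with hfdef
  have hfL : ∀ w (h1 : w ≠ x) (h2 : w ≠ y),
      f w = Sum.inr ⟨s(w, c w), T.mem_edgeSet.mpr (hcadj w h1 h2)⟩ := by
    intro w h1 h2
    simp only [hfdef]
    rw [dif_pos ⟨h1, h2⟩]
  set S : Set (V ⊕ T.edgeSet) := f '' L with hSdef
  have hxyne : x ≠ y := hxy.ne
  -- S is dominating
  have hSdom : IsDomSet (middleGraph T) S := by
    rintro (w | ⟨e, he⟩)
    · by_cases hw : w ≠ x ∧ w ≠ y
      · right
        refine ⟨f w, ⟨w, hw, rfl⟩, ?_⟩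
        rw [hfL w hw.1 hw.2]
        show w ∈ (s(w, c w) : Sym2 V)
        simp
      · right
        push_neg at hw
        by_cases hwx : w = x
        · refine ⟨f u, ⟨u, ⟨huxne, huyne⟩, rfl⟩, ?_⟩
          rw [hfL u huxne huyne]
          show w ∈ (s(u, c u) : Sym2 V)
          simp [hcu, hwx]
        · have hwy : w = y := hw hwx
          refine ⟨f v, ⟨v, ⟨hvxne, hvyne⟩, rfl⟩, ?_⟩
          rw [hfL v hvxne hvyne]
          show w ∈ (s(v, c v) : Sym2 V)
          simp [hcv, hwy]
    · induction e using Sym2.ind with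
      | _ a b =>
        have hab : T.Adj a b := he
        by_cases ha : a ≠ x ∧ a ≠ y
        · left
          refine ⟨a, ha, ?_⟩
          have hb : b = c a := hcall a ha.1 ha.2 b hab
          subst hb
          rw [hfL a ha.1 ha.2]
        · by_cases hb : b ≠ x ∧ b ≠ y
          · left
            refine ⟨b, hb, ?_⟩
            have ha' : a = c b := hcall b hb.1 hb.2 a hab.symm
            subst ha'
            rw [hfL b hb.1 hb.2]
            exact congrArg Sum.inr (Subtype.ext Sym2.eq_swap)
          · -- a, b ∈ {x, y}; e is the central edge
            right
            push_neg at ha hb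
            have hax_or : a = x ∨ a = y := by
              by_cases h : a = x
              · exact Or.inl h
              · exact Or.inr (ha h)
            have hbx_or : b = x ∨ b = y := by
              by_cases h : b = x
              · exact Or.inl h
              · exact Or.inr (hb h)
            have hexy : (s(a, b) : Sym2 V) = s(x, y) := by
              rcases hax_or with rfl | rfl
              · rcases hbx_or with rfl | rfl
                · exact absurd rfl hab.ne
                · rfl
              · rcases hbx_or with rfl | rfl
                · exact Sym2.eq_swap
                · exact absurd rfl hab.ne
            refine ⟨f u, ⟨u, ⟨huxne, huyne⟩, rfl⟩, ?_⟩
            rw [hfL u huxne huyne]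
            show _ ≠ _ ∧ ∃ z, z ∈ (s(a, b) : Sym2 V) ∧ z ∈ (s(u, c u) : Sym2 V)
            constructor
            · intro hcon
              have hcon' : (s(a, b) : Sym2 V) = s(u, c u) := congrArg Subtype.val hcon
              rw [hexy, hcu, Sym2.eq_iff] at hcon'
              rcases hcon' with ⟨h1, -⟩ | ⟨-, h2⟩
              · exact huxne h1.symm
              · exact huyne h2.symm
            · refine ⟨x, ?_, by simp [hcu]⟩
              rw [hexy]
              simp
  have hLfin : L.Finite := Set.toFinite L
  have hLcard : L.ncard = n - 2 := by
    have hL2 : L = Set.univ \ {x, y} := by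
      ext w
      simp [hLdef]
    rw [hL2, Set.ncard_diff (Set.subset_univ _), Set.ncard_univ, Set.ncard_pair hxyne,
      Nat.card_eq_fintype_card, hord]
  haveI : Finite ↥T.edgeSet := Subtype.finite
  have hub : domNum (middleGraph T) ≤ n - 2 := by
    have hmem : S.ncard ∈ {k : ℕ | ∃ S' : Set (V ⊕ T.edgeSet),
        IsDomSet (middleGraph T) S' ∧ S'.ncard = k} := ⟨S, hSdom, rfl⟩
    have h1 : domNum (middleGraph T) ≤ S.ncard := Nat.sInf_le hmem
    have h2 : S.ncard ≤ L.ncard := Set.ncard_image_le hLfin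
    omega
  have hlb : n - 2 ≤ domNum (middleGraph T) := by
    unfold domNum
    refine le_csInf ?_ ?_
    · exact ⟨S.ncard, ⟨S, hSdom, rfl⟩⟩
    rintro k ⟨D, hD, rfl⟩
    set g : V → V ⊕ T.edgeSet := fun w => if Sum.inl w ∈ D then Sum.inl w else f w with hgdef
    have hgD : ∀ w ∈ L, g w ∈ D := by
      rintro w ⟨hw1, hw2⟩
      simp only [hgdef]
      split
      · assumption
      · rename_i hnin
        rcases hD (Sum.inl w) with h | ⟨s, hsD, hadj⟩
        · exact absurd h hnin
        · rcases s with s | e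
          · exact absurd hadj (fun h => h)
          · have hw : w ∈ (e : Sym2 V) := hadj
            obtain ⟨z, hz⟩ := Sym2.mem_iff_exists.mp hw
            have hzadj : T.Adj w z := T.mem_edgeSet.mp (hz ▸ e.2)
            have hzc : z = c w := hcall w hw1 hw2 z hzadj
            have hfe : f w = Sum.inr e := by
              rw [hfL w hw1 hw2]
              refine congrArg Sum.inr (Subtype.ext ?_)
              show (s(w, c w) : Sym2 V) = (e : Sym2 V)
              rw [hz, hzc]
            rw [hfe]
            exact hsD
    have hinj : Set.InjOn g L := by
      rintro w ⟨hw1, hw2⟩ w' ⟨hw1', hw2'⟩ hgw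
      simp only [hgdef] at hgw
      split at hgw <;> split at hgw
      · exact Sum.inl.inj hgw
      · rw [hfL w' hw1' hw2'] at hgw
        exact absurd hgw (by simp)
      · rw [hfL w hw1 hw2] at hgw
        exact absurd hgw (by simp)
      · rw [hfL w hw1 hw2, hfL w' hw1' hw2'] at hgw
        have h2 : (s(w, c w) : Sym2 V) = s(w', c w') := congrArg Subtype.val (Sum.inr.inj hgw)
        rw [Sym2.eq_iff] at h2
        rcases h2 with ⟨h3, -⟩ | ⟨h3, -⟩
        · exact h3
        · rcases hcxy w' with h5 | h5 <;> rw [h5] at h3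
          · exact absurd h3 hw1
          · exact absurd h3 hw2
    have hsub : g '' L ⊆ D := by
      rintro - ⟨w, hw, rfl⟩
      exact hgD w hw
    have hle := Set.ncard_le_ncard hsub D.toFinite
    rw [Set.ncard_image_of_injOn hinj] at hle
    omega
  omega
end

section
/- Let G be a finite simple graph on n ≥ 2 vertices with no isolated vertices. Then ⌈n/2⌉ ≤ γ(M(G)) ≤ n − 1, where γ denotes the domination number. -/
lemma lower_aux {V : Type*} [Fintype V] (G : SimpleGraph V)
    (S : Set (V ⊕ G.edgeSet)) (hS : IsDomSet (middleGraph G) S) :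
    Fintype.card V ≤ 2 * S.ncard := by
  classical
  set F := S.toFinite.toFinset with hF
  let cov : V ⊕ G.edgeSet → Finset V := fun x =>
    match x with
    | Sum.inl v => {v}
    | Sum.inr e => Finset.univ.filter (· ∈ (e : Sym2 V))
  have hcov2 : ∀ x, (cov x).card ≤ 2 := by
    rintro (v | e)
    · simp [cov]
    · have key : ∀ z : Sym2 V, (Finset.univ.filter (· ∈ z)).card ≤ 2 := by
        intro z
        induction z using Sym2.ind with
        | _ a b =>
          calc (Finset.univ.filter (· ∈ s(a, b))).card
              ≤ ({a, b} : Finset V).card := by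
                apply Finset.card_le_card
                intro x hx
                simp only [Finset.mem_filter, Sym2.mem_iff] at hx
                simp [hx.2]
            _ ≤ 2 := (Finset.card_insert_le _ _).trans (by simp)
      exact key _
  have hsub : (Finset.univ : Finset V) ⊆ F.biUnion cov := by
    intro v _
    rcases hS (Sum.inl v) with h | ⟨s, hsS, hadj⟩
    · exact Finset.mem_biUnion.2 ⟨Sum.inl v, by simpa [hF] using h, by simp [cov]⟩
    · rcases s with w | e
      · exact hadj.elim
      · exact Finset.mem_biUnion.2 ⟨Sum.inr e, by simpa [hF] using hsS,
          by have h' : v ∈ (e : Sym2 V) := hadj; simpa [cov] using h'⟩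
  have hcalc : Fintype.card V ≤ 2 * F.card := by
    calc Fintype.card V = (Finset.univ : Finset V).card := (Finset.card_univ).symm
      _ ≤ (F.biUnion cov).card := Finset.card_le_card hsub
      _ ≤ ∑ x ∈ F, (cov x).card := Finset.card_biUnion_le
      _ ≤ ∑ _x ∈ F, 2 := Finset.sum_le_sum fun x _ => hcov2 x
      _ = 2 * F.card := by rw [Finset.sum_const, smul_eq_mul, mul_comm]
  have hFc : F.card = S.ncard := by
    rw [hF, Set.ncard_eq_toFinset_card S S.toFinite]
  rwa [hFc] at hcalc

/-- For a graph `G` on `n ≥ 2` vertices with no isolated vertices,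
`⌈n/2⌉ ≤ γ(M(G)) ≤ n - 1`. -/
theorem domNum_middle_bounds {V : Type*} [Fintype V] (G : SimpleGraph V) (n : ℕ)
    (hord : Fintype.card V = n) (hn : 2 ≤ n)
    (hiso : ∀ v : V, ∃ w : V, G.Adj v w) :
    (n + 1) / 2 ≤ domNum (middleGraph G) ∧ domNum (middleGraph G) ≤ n - 1 := by
  classical
  -- a vertex exists
  have hpos : 0 < Fintype.card V := by omega
  obtain ⟨a⟩ := Fintype.card_pos_iff.mp hpos
  obtain ⟨w, haw⟩ := hiso a
  have hne : a ≠ w := G.ne_of_adj haw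
  set e : G.edgeSet := ⟨s(a, w), G.mem_edgeSet.mpr haw⟩ with he
  -- the upper-bound dominating set
  set S : Set (V ⊕ G.edgeSet) :=
    insert (Sum.inr e) (Sum.inl '' {v | v ≠ a ∧ v ≠ w}) with hSdef
  have hdom : IsDomSet (middleGraph G) S := by
    rintro (v | f)
    · by_cases hva : v = a
      · refine Or.inr ⟨Sum.inr e, Set.mem_insert _ _, ?_⟩
        subst hva
        exact Sym2.mem_mk_left v w
      · by_cases hvw : v = w
        · refine Or.inr ⟨Sum.inr e, Set.mem_insert _ _, ?_⟩
          subst hvw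
          exact Sym2.mem_mk_right a v
        · exact Or.inl (Set.mem_insert_of_mem _ ⟨v, ⟨hva, hvw⟩, rfl⟩)
    · obtain ⟨z, hz⟩ := f
      induction z using Sym2.ind with
      | _ x y =>
        have hxy : G.Adj x y := G.mem_edgeSet.mp hz
        have hxyne : x ≠ y := G.ne_of_adj hxy
        by_cases hx : x ≠ a ∧ x ≠ w
        · refine Or.inr ⟨Sum.inl x, Set.mem_insert_of_mem _ ⟨x, hx, rfl⟩, ?_⟩
          show x ∈ s(x, y)
          simp
        · by_cases hy : y ≠ a ∧ y ≠ w
          · refine Or.inr ⟨Sum.inl y, Set.mem_insert_of_mem _ ⟨y, hy, rfl⟩, ?_⟩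
            show y ∈ s(x, y)
            simp
          · left
            have hx' : x = a ∨ x = w := by tauto
            have hy' : y = a ∨ y = w := by tauto
            have hzeq : s(x, y) = s(a, w) := by
              rcases hx' with rfl | rfl <;> rcases hy' with rfl | rfl
              · exact absurd rfl hxyne
              · rfl
              · exact Sym2.eq_swap
              · exact absurd rfl hxyne
            have heq : (⟨s(x, y), hz⟩ : G.edgeSet) = e := Subtype.ext hzeq
            exact Set.mem_insert_iff.mpr (Or.inl (congrArg Sum.inr heq))
  have hcard : S.ncard ≤ n - 1 := by
    have h1 : S.ncard ≤ (Sum.inl '' {v | v ≠ a ∧ v ≠ w} :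
        Set (V ⊕ G.edgeSet)).ncard + 1 := Set.ncard_insert_le _ _
    have h2 : (Sum.inl '' {v | v ≠ a ∧ v ≠ w} : Set (V ⊕ G.edgeSet)).ncard
        = ({v | v ≠ a ∧ v ≠ w} : Set V).ncard :=
      Set.ncard_image_of_injective _ Sum.inl_injective
    have h3 : ({v | v ≠ a ∧ v ≠ w} : Set V) = Set.univ \ {a, w} := by
      ext v; simp [and_comm]
    have h4 : (Set.univ \ ({a, w} : Set V)).ncard = n - 2 := by
      rw [Set.ncard_diff (Set.subset_univ _), Set.ncard_univ, Nat.card_eq_fintype_card,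
        hord, Set.ncard_pair hne]
    have h5 : ({v | v ≠ a ∧ v ≠ w} : Set V).ncard = n - 2 := by rw [h3]; exact h4
    omega
  have hmem : S.ncard ∈ {k : ℕ | ∃ T : Set (V ⊕ G.edgeSet),
      IsDomSet (middleGraph G) T ∧ T.ncard = k} := ⟨S, hdom, rfl⟩
  constructor
  · have hne' : {k : ℕ | ∃ T : Set (V ⊕ G.edgeSet),
        IsDomSet (middleGraph G) T ∧ T.ncard = k}.Nonempty := ⟨_, hmem⟩
    obtain ⟨T, hT, hTcard⟩ := Nat.sInf_mem hne'
    have := lower_aux G T hT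
    rw [hord, hTcard] at this
    show (n + 1) / 2 ≤ domNum (middleGraph G)
    unfold domNum
    omega
  · exact (Nat.sInf_le hmem).trans hcard
end

section
/- Let G be a finite simple graph of order n ≥ 2 with no isolated vertices. Then γ(M(G)) = ρ(G), where γ denotes the domination number and ρ(G) is the edge cover number of G. -/
/-- The edge cover number of a graph `G`. -/
noncomputable def edgeCoverNum {V : Type*} (G : SimpleGraph V) : ℕ :=
  sInf {k : ℕ | ∃ S : Set (Sym2 V), S ⊆ G.edgeSet ∧ (∀ v : V, ∃ e ∈ S, v ∈ e) ∧ S.ncard = k}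

/-- For a graph `G` of order `n ≥ 2` with no isolated vertex,
`γ(M(G)) = ρ(G)`, the edge cover number of `G`. -/
theorem domNum_middle_eq_edgeCoverNum {V : Type*} [Fintype V] (G : SimpleGraph V) (n : ℕ)
    (hord : Fintype.card V = n) (hn : 2 ≤ n)
    (hiso : ∀ v : V, ∃ w : V, G.Adj v w) :
    domNum (middleGraph G) = edgeCoverNum G := by
  classical
  choose w hw using hiso
  -- Nonemptiness of the two optimization sets
  have hcovNe : {k : ℕ | ∃ S : Set (Sym2 V), S ⊆ G.edgeSet ∧
      (∀ v : V, ∃ e ∈ S, v ∈ e) ∧ S.ncard = k}.Nonempty :=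
    ⟨G.edgeSet.ncard, G.edgeSet, le_refl _,
      fun v => ⟨s(v, w v), (G.mem_edgeSet).mpr (hw v), Sym2.mem_mk_left _ _⟩, rfl⟩
  have hdomNe : {k : ℕ | ∃ S : Set (V ⊕ G.edgeSet), IsDomSet (middleGraph G) S ∧
      S.ncard = k}.Nonempty :=
    ⟨(Set.univ : Set (V ⊕ G.edgeSet)).ncard, Set.univ,
      fun v => Or.inl (Set.mem_univ v), rfl⟩
  refine le_antisymm ?_ ?_
  · -- domNum ≤ edgeCoverNum : take an optimal edge cover S, turn it into a dominating set
    obtain ⟨S, hSE, hScov, hSk⟩ := Nat.sInf_mem hcovNe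
    have hEq : edgeCoverNum G = S.ncard := hSk.symm
    rw [hEq]
    set D : Set (V ⊕ G.edgeSet) := Sum.inr '' {e : G.edgeSet | (e : Sym2 V) ∈ S} with hD
    have hdom : IsDomSet (middleGraph G) D := by
      rintro (v | ⟨s, hs⟩)
      · obtain ⟨e, heS, hve⟩ := hScov v
        refine Or.inr ⟨Sum.inr ⟨e, hSE heS⟩, ⟨⟨e, hSE heS⟩, heS, rfl⟩, ?_⟩
        exact hve
      · by_cases hsS : s ∈ S
        · exact Or.inl ⟨⟨s, hs⟩, hsS, rfl⟩
        · induction s using Sym2.ind with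
          | _ a b =>
            obtain ⟨f, hfS, haf⟩ := hScov a
            refine Or.inr ⟨Sum.inr ⟨f, hSE hfS⟩, ⟨⟨f, hSE hfS⟩, hfS, rfl⟩, ?_⟩
            refine ⟨?_, a, Sym2.mem_mk_left _ _, haf⟩
            intro h
            apply hsS
            have : (⟨s(a,b), hs⟩ : G.edgeSet) = ⟨f, hSE hfS⟩ := h
            obtain rfl : s(a,b) = f := Subtype.ext_iff.mp this
            exact hfS
    have hcard : D.ncard = S.ncard := by
      rw [hD, Set.ncard_image_of_injective _ Sum.inr_injective]
      have : S = Subtype.val '' {e : G.edgeSet | (e : Sym2 V) ∈ S} := by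
        ext x
        constructor
        · intro hx; exact ⟨⟨x, hSE hx⟩, hx, rfl⟩
        · rintro ⟨e, he, rfl⟩; exact he
      conv_rhs => rw [this]
      rw [Set.ncard_image_of_injective _ Subtype.val_injective]
    exact Nat.sInf_le ⟨D, hdom, hcard⟩
  · -- edgeCoverNum ≤ domNum : take an optimal dominating set D, turn it into an edge cover
    obtain ⟨D, hDdom, hDk⟩ := Nat.sInf_mem hdomNe
    have hEq : domNum (middleGraph G) = D.ncard := hDk.symm
    rw [hEq]
    set g : V ⊕ G.edgeSet → Sym2 V := fun x =>
      match x with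
      | Sum.inl v => s(v, w v)
      | Sum.inr e => (e : Sym2 V) with hg
    set T : Set (Sym2 V) := g '' D with hT
    have hTE : T ⊆ G.edgeSet := by
      rintro x ⟨(v | e), _, rfl⟩
      · exact (G.mem_edgeSet).mpr (hw v)
      · exact e.2
    have hTcov : ∀ v : V, ∃ e ∈ T, v ∈ e := by
      intro v
      rcases hDdom (Sum.inl v) with hv | ⟨s, hsD, hadj⟩
      · exact ⟨s(v, w v), ⟨Sum.inl v, hv, rfl⟩, Sym2.mem_mk_left _ _⟩
      · rcases s with v' | e
        · exact hadj.elim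
        · exact ⟨(e : Sym2 V), ⟨Sum.inr e, hsD, rfl⟩, hadj⟩
    have hcard : T.ncard ≤ D.ncard := Set.ncard_image_le D.toFinite
    exact le_trans (Nat.sInf_le ⟨T, hTE, hTcov, rfl⟩) hcard
end

section
/- Let G be a finite connected simple graph of order n ≥ 2. Then γ(M(G ∘ P₂)) = n + γ(M(G)), where G ∘ P₂ denotes the 2-corona of G and γ denotes the domination number. -/
/-- The 2-corona `G ∘ P₂`: attach to each vertex `v` of `G` a path `v — v' — v''`. -/
def twoCorona {V : Type*} (G : SimpleGraph V) : SimpleGraph (V ⊕ V ⊕ V) where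
  Adj x y :=
    match x, y with
    | Sum.inl a, Sum.inl b => G.Adj a b
    | Sum.inl a, Sum.inr (Sum.inl b) => a = b
    | Sum.inr (Sum.inl a), Sum.inl b => b = a
    | Sum.inr (Sum.inl a), Sum.inr (Sum.inr b) => a = b
    | Sum.inr (Sum.inr a), Sum.inr (Sum.inl b) => b = a
    | _, _ => False
  symm := by
    constructor
    rintro (a | a | a) (b | b | b) h <;> simp_all
    exact h.symm
  loopless := by
    constructor
    rintro (a | a | a) h <;> simp_all

section Aux

section Aux
variable {V : Type*} (G : SimpleGraph V)

def e2 (a : V) : (twoCorona G).edgeSet :=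
  ⟨s(Sum.inr (Sum.inl a), Sum.inr (Sum.inr a)), rfl⟩

def embE (e : G.edgeSet) : (twoCorona G).edgeSet :=
  ⟨Sym2.map Sum.inl e.1, by
    obtain ⟨e, he⟩ := e
    induction e using Sym2.ind with
    | _ a b => rw [Sym2.map_pair_eq]; exact he⟩

lemma classify (f : (twoCorona G).edgeSet) :
    (∃ e : G.edgeSet, (f : Sym2 (V⊕V⊕V)) = Sym2.map Sum.inl e.1) ∨
    (∃ a : V, (f : Sym2 (V⊕V⊕V)) = s(Sum.inl a, Sum.inr (Sum.inl a))) ∨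
    (∃ a : V, (f : Sym2 (V⊕V⊕V)) = s(Sum.inr (Sum.inl a), Sum.inr (Sum.inr a))) := by
  obtain ⟨f, hf⟩ := f
  induction f using Sym2.ind with
  | _ x y =>
    rcases x with a | a | a <;> rcases y with b | b | b
    · exact Or.inl ⟨⟨s(a, b), hf⟩, by rw [Sym2.map_pair_eq]⟩
    · exact Or.inr (Or.inl ⟨a, by rcases hf; rfl⟩)
    · exact hf.elim
    · exact Or.inr (Or.inl ⟨a, by rcases hf; exact Sym2.eq_swap⟩)
    · exact hf.elim
    · exact Or.inr (Or.inr ⟨a, by rcases hf; rfl⟩)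
    · exact hf.elim
    · exact Or.inr (Or.inr ⟨a, by rcases hf; exact Sym2.eq_swap⟩)
    · exact hf.elim

lemma upper {V : Type*} [Fintype V] (G : SimpleGraph V) :
    domNum (middleGraph (twoCorona G)) ≤ Fintype.card V + domNum (middleGraph G) := by
  classical
  have hne : {k : ℕ | ∃ S : Set (V ⊕ G.edgeSet), IsDomSet (middleGraph G) S ∧ S.ncard = k}.Nonempty :=
    ⟨_, Set.univ, fun v => Or.inl (Set.mem_univ v), rfl⟩
  obtain ⟨S, hS, hcard⟩ := Nat.sInf_mem hne
  set emb : (V ⊕ G.edgeSet) → ((V⊕V⊕V) ⊕ (twoCorona G).edgeSet) := fun x =>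
    match x with
    | Sum.inl v => Sum.inl (Sum.inl v)
    | Sum.inr e => Sum.inr (embE G e) with hemb
  set R : Set ((V⊕V⊕V) ⊕ (twoCorona G).edgeSet) :=
    Set.range (fun a : V => Sum.inr (e2 G a)) with hR
  set T : Set ((V⊕V⊕V) ⊕ (twoCorona G).edgeSet) := emb '' S ∪ R with hT
  have hdom : IsDomSet (middleGraph (twoCorona G)) T := by
    rintro (x | f)
    · rcases x with a | a | a
      · rcases hS (Sum.inl a) with h | ⟨s, hs, hadj⟩
        · exact Or.inl (Or.inl ⟨Sum.inl a, h, rfl⟩)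
        · rcases s with v | e
          · exact hadj.elim
          · refine Or.inr ⟨Sum.inr (embE G e), Or.inl ⟨Sum.inr e, hs, rfl⟩, ?_⟩
            show (Sum.inl a : V⊕V⊕V) ∈ Sym2.map Sum.inl e.1
            rw [Sym2.mem_map]; exact ⟨a, hadj, rfl⟩
      · refine Or.inr ⟨Sum.inr (e2 G a), Or.inr ⟨a, rfl⟩, ?_⟩
        show (Sum.inr (Sum.inl a) : V⊕V⊕V) ∈ (e2 G a : Sym2 (V⊕V⊕V))
        simp [e2]
      · refine Or.inr ⟨Sum.inr (e2 G a), Or.inr ⟨a, rfl⟩, ?_⟩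
        show (Sum.inr (Sum.inr a) : V⊕V⊕V) ∈ (e2 G a : Sym2 (V⊕V⊕V))
        simp [e2]
    · rcases classify G f with ⟨e, he⟩ | ⟨a, ha⟩ | ⟨a, ha⟩
      · have hfe : f = embE G e := Subtype.ext he
        rcases hS (Sum.inr e) with h | ⟨s, hs, hadj⟩
        · exact Or.inl (Or.inl ⟨Sum.inr e, h, by rw [hfe]⟩)
        · rcases s with v | e'
          · refine Or.inr ⟨Sum.inl (Sum.inl v), Or.inl ⟨Sum.inl v, hs, rfl⟩, ?_⟩
            show (Sum.inl v : V⊕V⊕V) ∈ (f : Sym2 (V⊕V⊕V))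
            rw [he, Sym2.mem_map]; exact ⟨v, hadj, rfl⟩
          · obtain ⟨hne', w, hw1, hw2⟩ := hadj
            refine Or.inr ⟨Sum.inr (embE G e'), Or.inl ⟨Sum.inr e', hs, rfl⟩, ?_, ?_⟩
            · intro hc
              apply hne'
              apply Subtype.ext
              have h2 : (f : Sym2 (V⊕V⊕V)) = (embE G e' : Sym2 (V⊕V⊕V)) :=
                congrArg Subtype.val hc
              rw [he] at h2
              exact Sym2.map.injective Sum.inl_injective h2
            · exact ⟨Sum.inl w, by rw [he, Sym2.mem_map]; exact ⟨w, hw1, rfl⟩,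
                by show _ ∈ Sym2.map Sum.inl e'.1; rw [Sym2.mem_map]; exact ⟨w, hw2, rfl⟩⟩
      · refine Or.inr ⟨Sum.inr (e2 G a), Or.inr ⟨a, rfl⟩, ?_, Sum.inr (Sum.inl a), ?_, ?_⟩
        · intro hc
          have := congrArg Subtype.val hc
          rw [ha] at this
          simp only [e2, Sym2.eq_iff] at this
          rcases this with ⟨h1, -⟩ | ⟨h1, -⟩ <;> simp at h1
        · rw [ha]; simp
        · simp [e2]
      · have : f = e2 G a := Subtype.ext ha
        exact Or.inl (Or.inr ⟨a, by rw [this]⟩)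
  have hle : T.ncard ≤ Fintype.card V + S.ncard := by
    have h1 : (emb '' S).ncard ≤ S.ncard := Set.ncard_image_le S.toFinite
    have h2 : R.ncard ≤ Fintype.card V := by
      rw [hR, ← Set.image_univ]
      calc ((fun a : V => (Sum.inr (e2 G a) : (V⊕V⊕V) ⊕ (twoCorona G).edgeSet)) '' Set.univ).ncard
          ≤ (Set.univ : Set V).ncard := Set.ncard_image_le Set.univ.toFinite
        _ = Fintype.card V := by rw [Set.ncard_univ, Nat.card_eq_fintype_card]
    calc T.ncard ≤ (emb '' S).ncard + R.ncard := Set.ncard_union_le _ _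
      _ ≤ Fintype.card V + S.ncard := by omega
  calc domNum (middleGraph (twoCorona G)) ≤ T.ncard := Nat.sInf_le ⟨T, hdom, rfl⟩
    _ ≤ Fintype.card V + S.ncard := hle
    _ = Fintype.card V + domNum (middleGraph G) := by rw [hcard]; rfl



lemma map_inl_ne_e2 (e : Sym2 V) (a : V) :
    Sym2.map (Sum.inl : V → V⊕V⊕V) e ≠ s(Sum.inr (Sum.inl a), Sum.inr (Sum.inr a)) := by
  intro h
  have : (Sum.inr (Sum.inl a) : V⊕V⊕V) ∈ Sym2.map Sum.inl e := by rw [h]; simp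
  rw [Sym2.mem_map] at this
  obtain ⟨c, -, hc⟩ := this
  exact absurd hc (by simp)

lemma pend_edge (f : (twoCorona G).edgeSet) (a : V)
    (h : (Sum.inr (Sum.inr a) : V⊕V⊕V) ∈ (f : Sym2 (V⊕V⊕V))) : f = e2 G a := by
  obtain ⟨f, hf⟩ := f
  apply Subtype.ext
  induction f using Sym2.ind with
  | _ x y =>
    show s(x, y) = s(Sum.inr (Sum.inl a), Sum.inr (Sum.inr a))
    rw [Sym2.mem_iff] at h
    rcases x with b | b | b <;> rcases y with c | c | c
    · simp at h
    · simp at h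
    · exact hf.elim
    · simp at h
    · exact hf.elim
    · obtain rfl : b = c := hf
      obtain rfl : a = b := by
        rcases h with h | h
        · exact absurd h (by simp)
        · exact Sum.inr_injective (Sum.inr_injective h)
      rfl
    · exact hf.elim
    · obtain rfl : c = b := hf
      obtain rfl : a = c := by
        rcases h with h | h
        · exact Sum.inr_injective (Sum.inr_injective h)
        · exact absurd h (by simp)
      exact Sym2.eq_swap
    · exact hf.elim

open Classical in
noncomputable def gmap [Nonempty V] : ((V⊕V⊕V) ⊕ (twoCorona G).edgeSet) → V ⊕ G.edgeSet
  | Sum.inl (Sum.inl a) => Sum.inl a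
  | Sum.inl (Sum.inr (Sum.inl a)) => Sum.inl a
  | Sum.inl (Sum.inr (Sum.inr a)) => Sum.inl a
  | Sum.inr f =>
    if h : ∃ e : G.edgeSet, (f : Sym2 (V⊕V⊕V)) = Sym2.map Sum.inl e.1 then Sum.inr h.choose
    else if h2 : ∃ a : V, (f : Sym2 (V⊕V⊕V)) = s(Sum.inl a, Sum.inr (Sum.inl a)) then
      Sum.inl h2.choose
    else Sum.inl (Classical.arbitrary V)

lemma gmap_edge_G [Nonempty V] (e : G.edgeSet) (f : (twoCorona G).edgeSet)
    (hf : (f : Sym2 (V⊕V⊕V)) = Sym2.map Sum.inl e.1) : gmap G (Sum.inr f) = Sum.inr e := by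
  have h : ∃ e : G.edgeSet, (f : Sym2 (V⊕V⊕V)) = Sym2.map Sum.inl e.1 := ⟨e, hf⟩
  rw [gmap, dif_pos h]
  have he2 : h.choose = e :=
    Subtype.ext (Sym2.map.injective Sum.inl_injective (h.choose_spec.symm.trans hf))
  rw [he2]

lemma gmap_edge_e1 [Nonempty V] (a : V) (f : (twoCorona G).edgeSet)
    (hf : (f : Sym2 (V⊕V⊕V)) = s(Sum.inl a, Sum.inr (Sum.inl a))) :
    gmap G (Sum.inr f) = Sum.inl a := by
  have h : ¬ ∃ e : G.edgeSet, (f : Sym2 (V⊕V⊕V)) = Sym2.map Sum.inl e.1 := by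
    rintro ⟨e, he⟩
    rw [hf] at he
    have : (Sum.inr (Sum.inl a) : V⊕V⊕V) ∈ Sym2.map Sum.inl e.1 := by rw [← he]; simp
    rw [Sym2.mem_map] at this
    obtain ⟨c, -, hc⟩ := this
    exact absurd hc (by simp)
  have h2 : ∃ b : V, (f : Sym2 (V⊕V⊕V)) = s(Sum.inl b, Sum.inr (Sum.inl b)) := ⟨a, hf⟩
  rw [gmap, dif_neg h, dif_pos h2]
  have := h2.choose_spec.symm.trans hf
  rw [Sym2.eq_iff] at this
  rcases this with ⟨h1, -⟩ | ⟨-, h1⟩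
  · rw [Sum.inl_injective h1]
  · exact absurd h1 (by simp)

lemma lower {V : Type*} [Fintype V] [Nonempty V] (G : SimpleGraph V) :
    Fintype.card V + domNum (middleGraph G) ≤ domNum (middleGraph (twoCorona G)) := by
  classical
  have hne : {k : ℕ | ∃ S : Set ((V⊕V⊕V) ⊕ (twoCorona G).edgeSet),
      IsDomSet (middleGraph (twoCorona G)) S ∧ S.ncard = k}.Nonempty :=
    ⟨_, Set.univ, fun v => Or.inl (Set.mem_univ v), rfl⟩
  obtain ⟨T, hT, hTcard⟩ := Nat.sInf_mem hne
  have hpend : ∀ a : V, Sum.inl (Sum.inr (Sum.inr a)) ∈ T ∨ Sum.inr (e2 G a) ∈ T := by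
    intro a
    rcases hT (Sum.inl (Sum.inr (Sum.inr a))) with h | ⟨s, hs, hadj⟩
    · exact Or.inl h
    · rcases s with w | f
      · exact hadj.elim
      · right
        have hadj' : (Sum.inr (Sum.inr a) : V⊕V⊕V) ∈ (f : Sym2 (V⊕V⊕V)) := hadj
        rwa [← pend_edge G f a hadj']
  set p : V → ((V⊕V⊕V) ⊕ (twoCorona G).edgeSet) := fun a =>
    if Sum.inl (Sum.inr (Sum.inr a)) ∈ T then Sum.inl (Sum.inr (Sum.inr a))
    else Sum.inr (e2 G a) with hp
  have hpmem : ∀ a, p a ∈ T := by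
    intro a
    by_cases h : Sum.inl (Sum.inr (Sum.inr a)) ∈ T
    · simp only [hp, if_pos h]; exact h
    · simp only [hp, if_neg h]; exact (hpend a).resolve_left h
  have hpinj : Function.Injective p := by
    intro a b hab
    by_cases ha' : Sum.inl (Sum.inr (Sum.inr a)) ∈ T <;>
      by_cases hb' : Sum.inl (Sum.inr (Sum.inr b)) ∈ T <;>
      simp only [hp, if_pos, if_neg, ha', hb', if_true, if_false] at hab <;>
      simp_all [e2, Sym2.eq_iff, Subtype.ext_iff]
  set P : Set ((V⊕V⊕V) ⊕ (twoCorona G).edgeSet) := Set.range p with hPdef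
  have hPT : P ⊆ T := by rintro x ⟨a, rfl⟩; exact hpmem a
  have hPcard : P.ncard = Fintype.card V := by
    rw [hPdef, ← Set.image_univ, Set.ncard_image_of_injective _ hpinj,
      Set.ncard_univ, Nat.card_eq_fintype_card]
  have notP_v : ∀ (x : V⊕V⊕V), (∀ a, x ≠ Sum.inr (Sum.inr a)) → Sum.inl x ∉ P := by
    rintro x hx ⟨a, ha⟩
    by_cases h : Sum.inl (Sum.inr (Sum.inr a)) ∈ T
    · simp only [hp, if_pos h] at ha
      exact hx a (Sum.inl_injective ha.symm)
    · simp only [hp, if_neg h] at ha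
      exact Sum.inl_ne_inr ha.symm
  have P_edge : ∀ f : (twoCorona G).edgeSet, Sum.inr f ∈ P → ∃ b, f = e2 G b := by
    rintro f ⟨a, ha⟩
    by_cases h : Sum.inl (Sum.inr (Sum.inr a)) ∈ T
    · simp only [hp, if_pos h] at ha
      exact absurd ha (by simp)
    · simp only [hp, if_neg h] at ha
      exact ⟨a, (Sum.inr_injective ha).symm⟩
  set S0 : Set ((V⊕V⊕V) ⊕ (twoCorona G).edgeSet) := T \ P with hS0
  set S' : Set (V ⊕ G.edgeSet) := gmap G '' S0 with hS'
  have hdom : IsDomSet (middleGraph G) S' := by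
    rintro (a | e)
    · rcases hT (Sum.inl (Sum.inl a)) with h | ⟨s, hs, hadj⟩
      · have hmem : Sum.inl (Sum.inl a) ∈ S0 := ⟨h, notP_v _ (by simp)⟩
        exact Or.inl ⟨_, hmem, rfl⟩
      · rcases s with w | f
        · exact hadj.elim
        · have hadj' : (Sum.inl a : V⊕V⊕V) ∈ (f : Sym2 (V⊕V⊕V)) := hadj
          rcases classify G f with ⟨e, he⟩ | ⟨b, hb⟩ | ⟨b, hb⟩
          · have hae : a ∈ (e : Sym2 V) := by
              rw [he, Sym2.mem_map] at hadj'
              obtain ⟨c, hc, hc2⟩ := hadj'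
              rwa [← Sum.inl_injective hc2]
            have hnp : Sum.inr f ∉ P := by
              intro hmem
              obtain ⟨b, rfl⟩ := P_edge f hmem
              exact map_inl_ne_e2 e.1 b he.symm
            refine Or.inr ⟨Sum.inr e, ⟨_, ⟨hs, hnp⟩, gmap_edge_G G e f he⟩, hae⟩
          · have hab : a = b := by
              rw [hb, Sym2.mem_iff] at hadj'
              rcases hadj' with h1 | h1
              · exact Sum.inl_injective h1
              · exact absurd h1 (by simp)
            have hnp : Sum.inr f ∉ P := by
              intro hmem
              obtain ⟨c, rfl⟩ := P_edge f hmem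
              have : (Sum.inl b : V⊕V⊕V) ∈ ((e2 G c : (twoCorona G).edgeSet) : Sym2 (V⊕V⊕V)) := by
                rw [hb]; simp
              simp [e2] at this
            subst hab
            exact Or.inl ⟨_, ⟨hs, hnp⟩, gmap_edge_e1 G a f hb⟩
          · rw [hb, Sym2.mem_iff] at hadj'
            rcases hadj' with h1 | h1 <;> exact absurd h1 (by simp)
    · rcases hT (Sum.inr (embE G e)) with h | ⟨s, hs, hadj⟩
      · have hnp : Sum.inr (embE G e) ∉ P := by
          intro hmem
          obtain ⟨b, hb⟩ := P_edge _ hmem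
          exact map_inl_ne_e2 e.1 b (congrArg Subtype.val hb)
        exact Or.inl ⟨_, ⟨h, hnp⟩, gmap_edge_G G e (embE G e) rfl⟩
      · rcases s with w | f
        · have hadj' : w ∈ Sym2.map (Sum.inl : V → V⊕V⊕V) e.1 := hadj
          rw [Sym2.mem_map] at hadj'
          obtain ⟨c, hc, rfl⟩ := hadj'
          have hmem : Sum.inl (Sum.inl c) ∈ S0 := ⟨hs, notP_v _ (by simp)⟩
          exact Or.inr ⟨Sum.inl c, ⟨_, hmem, rfl⟩, hc⟩
        · obtain ⟨hne', w, hw1, hw2⟩ := hadj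
          have hw1' : w ∈ Sym2.map (Sum.inl : V → V⊕V⊕V) e.1 := hw1
          rw [Sym2.mem_map] at hw1'
          obtain ⟨a, hae, rfl⟩ := hw1'
          rcases classify G f with ⟨e', he'⟩ | ⟨b, hb⟩ | ⟨b, hb⟩
          · have hae' : a ∈ (e' : Sym2 V) := by
              rw [he', Sym2.mem_map] at hw2
              obtain ⟨c, hc, hc2⟩ := hw2
              rwa [← Sum.inl_injective hc2]
            have hnp : Sum.inr f ∉ P := by
              intro hmem
              obtain ⟨b, rfl⟩ := P_edge f hmem
              exact map_inl_ne_e2 e'.1 b he'.symm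
            have hee' : e ≠ e' := by
              rintro rfl
              exact hne' (Subtype.ext he'.symm)
            exact Or.inr ⟨Sum.inr e', ⟨_, ⟨hs, hnp⟩, gmap_edge_G G e' f he'⟩,
              hee', a, hae, hae'⟩
          · have hab : a = b := by
              rw [hb, Sym2.mem_iff] at hw2
              rcases hw2 with h1 | h1
              · exact Sum.inl_injective h1
              · exact absurd h1 (by simp)
            have hnp : Sum.inr f ∉ P := by
              intro hmem
              obtain ⟨c, rfl⟩ := P_edge f hmem
              have : (Sum.inl b : V⊕V⊕V) ∈ ((e2 G c : (twoCorona G).edgeSet) : Sym2 (V⊕V⊕V)) := by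
                rw [hb]; simp
              simp [e2] at this
            subst hab
            exact Or.inr ⟨Sum.inl a, ⟨_, ⟨hs, hnp⟩, gmap_edge_e1 G a f hb⟩, hae⟩
          · rw [hb, Sym2.mem_iff] at hw2
            rcases hw2 with h1 | h1 <;> exact absurd h1 (by simp)
  have hS'card : S'.ncard ≤ T.ncard - Fintype.card V := by
    calc S'.ncard ≤ S0.ncard := Set.ncard_image_le S0.toFinite
      _ = T.ncard - P.ncard := Set.ncard_diff hPT
      _ = T.ncard - Fintype.card V := by rw [hPcard]
  have hcardle : Fintype.card V ≤ T.ncard := by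
    rw [← hPcard]
    exact Set.ncard_le_ncard hPT T.toFinite
  have hdle : domNum (middleGraph G) ≤ S'.ncard := Nat.sInf_le ⟨S', hdom, rfl⟩
  have hfin : domNum (middleGraph (twoCorona G)) = T.ncard := hTcard.symm
  omega

end Aux

/-- For a connected graph `G` of order `n ≥ 2`,
`γ(M(G ∘ P₂)) = n + γ(M(G))`. -/
theorem domNum_middle_twoCorona {V : Type*} [Fintype V] (G : SimpleGraph V) (n : ℕ)
    (hord : Fintype.card V = n) (hn : 2 ≤ n) (hconn : G.Connected) :
    domNum (middleGraph (twoCorona G)) = n + domNum (middleGraph G) := by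
  subst hord
  have : Nonempty V := Fintype.card_pos_iff.mp (by omega)
  exact le_antisymm (upper G) (lower G)
end Aux
end

section
/- Let G be a finite connected simple graph of order n ≥ 2 and let p ≥ n be an integer. Then γ(M(G + K̄_p)) = p, where G + K̄_p is the join of G with the edgeless graph on p vertices and γ denotes the domination number. -/
/-- The join `G + H` of two graphs. -/
def graphJoin {V W : Type*} (G : SimpleGraph V) (H : SimpleGraph W) :
    SimpleGraph (V ⊕ W) where
  Adj x y :=
    match x, y with
    | Sum.inl a, Sum.inl b => G.Adj a b
    | Sum.inl _, Sum.inr _ => True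
    | Sum.inr _, Sum.inl _ => True
    | Sum.inr a, Sum.inr b => H.Adj a b
  symm := by
    constructor
    rintro (a | a) (b | b) h
    · exact G.adj_symm h
    · trivial
    · trivial
    · exact H.adj_symm h
  loopless := by
    constructor
    rintro (a | a) h
    · exact G.irrefl h
    · exact H.irrefl h

/-- For a connected graph `G` of order `n ≥ 2` and `p ≥ n`,
`γ(M(G + K̄_p)) = p`. -/
theorem domNum_middle_join_big {V : Type*} [Fintype V] (G : SimpleGraph V) (n p : ℕ)
    (hord : Fintype.card V = n) (hn : 2 ≤ n) (hconn : G.Connected) (hp : n ≤ p) :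
    domNum (middleGraph (graphJoin G (⊥ : SimpleGraph (Fin p)))) = p := by
  classical
  set H : SimpleGraph (V ⊕ Fin p) := graphJoin G (⊥ : SimpleGraph (Fin p)) with hHdef
  set M : SimpleGraph ((V ⊕ Fin p) ⊕ H.edgeSet) := middleGraph H with hMdef
  obtain ⟨g⟩ : Nonempty (V ↪ Fin p) := by
    apply Function.Embedding.nonempty_of_card_le
    rw [hord, Fintype.card_fin]; exact hp
  have hcross : ∀ (v : V) (w : Fin p), s(Sum.inl v, Sum.inr w) ∈ H.edgeSet := by
    intro v w
    rw [SimpleGraph.mem_edgeSet]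
    show True
    trivial
  -- every edge of H contains at most one right-vertex
  have huniq : ∀ e ∈ H.edgeSet, ∀ w w' : Fin p,
      Sum.inr w ∈ e → Sum.inr w' ∈ e → w = w' := by
    intro e he
    induction e using Sym2.ind with
    | _ a b =>
      intro w w' hw hw'
      rw [SimpleGraph.mem_edgeSet] at he
      rw [Sym2.mem_iff] at hw hw'
      rcases hw with rfl | rfl <;> rcases hw' with h | h
      · exact (Sum.inr.inj h).symm
      · subst h; exact absurd he (by exact fun h => h)
      · subst h; exact absurd he (by exact fun h => h)
      · exact (Sum.inr.inj h).symm
  -- the dominating set of size p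
  let F : Fin p → (V ⊕ Fin p) ⊕ H.edgeSet := fun w =>
    if h : ∃ v, g v = w then
      Sum.inr ⟨s(Sum.inl h.choose, Sum.inr w), hcross _ _⟩
    else Sum.inl (Sum.inr w)
  have hFinj : Function.Injective F := by
    intro w w' h
    by_cases h1 : ∃ v, g v = w <;> by_cases h2 : ∃ v, g v = w' <;>
      simp only [F, dif_pos, dif_neg, h1, h2, dite_true, dite_false] at h
    · have := Subtype.ext_iff.mp (Sum.inr.inj h)
      rw [Sym2.eq_iff] at this
      rcases this with ⟨-, h3⟩ | ⟨h3, -⟩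
      · exact Sum.inr.inj h3
      · exact absurd h3 (by simp)
    · exact absurd h (by simp)
    · exact absurd h (by simp)
    · exact Sum.inr.inj (Sum.inl.inj h)
  have hdom : IsDomSet M (Set.range F) := by
    rintro (⟨v | w⟩ | ⟨e, he⟩)
    · -- a left vertex v : is dominated by F (g v)
      right
      refine ⟨F (g v), Set.mem_range_self _, ?_⟩
      have hex : ∃ u, g u = g v := ⟨v, rfl⟩
      have hv : hex.choose = v := g.injective hex.choose_spec
      simp only [F, dif_pos hex]
      show Sum.inl v ∈ _
      rw [hv]
      exact Sym2.mem_mk_left _ _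
    · -- a right vertex w
      by_cases hw : ∃ u, g u = w
      · right
        refine ⟨F w, Set.mem_range_self _, ?_⟩
        simp only [F, dif_pos hw]
        show Sum.inr w ∈ _
        exact Sym2.mem_mk_right _ _
      · left
        refine ⟨w, ?_⟩
        simp only [F, dif_neg hw]
    · -- an edge e of H
      -- e has a left endpoint v
      obtain ⟨v, hv⟩ : ∃ v : V, Sum.inl v ∈ e := by
        induction e using Sym2.ind with
        | _ a b =>
          rw [SimpleGraph.mem_edgeSet] at he
          rcases a with v | w <;> rcases b with v' | w'
          · exact ⟨v, Sym2.mem_mk_left _ _⟩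
          · exact ⟨v, Sym2.mem_mk_left _ _⟩
          · exact ⟨v', Sym2.mem_mk_right _ _⟩
          · exact absurd he (by exact fun h => h)
      have hex : ∃ u, g u = g v := ⟨v, rfl⟩
      have hv' : hex.choose = v := g.injective hex.choose_spec
      by_cases heq : (⟨e, he⟩ : H.edgeSet) = ⟨s(Sum.inl v, Sum.inr (g v)), hcross _ _⟩
      · left
        refine ⟨g v, ?_⟩
        simp only [F, dif_pos hex]
        rw [heq]
        congr 2
        rw [hv']
      · right
        refine ⟨F (g v), Set.mem_range_self _, ?_⟩
        simp only [F, dif_pos hex]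
        refine ⟨?_, Sum.inl v, hv, ?_⟩
        · rw [hv']; exact fun h => heq (by exact h)
        · rw [hv']; exact Sym2.mem_mk_left _ _
  have hcard : (Set.range F).ncard = p := by
    rw [← Nat.card_coe_set_eq, Nat.card_range_of_injective hFinj,
      Nat.card_eq_fintype_card, Fintype.card_fin]
  have hmem : p ∈ {k : ℕ | ∃ S, IsDomSet M S ∧ S.ncard = k} := ⟨Set.range F, hdom, hcard⟩
  refine le_antisymm (Nat.sInf_le hmem) (le_csInf ⟨p, hmem⟩ ?_)
  rintro k ⟨S, hS, rfl⟩
  -- lower bound: build an injection Fin p ↪ S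
  have hchoice : ∀ w : Fin p, ∃ s, s ∈ S ∧
      (s = Sum.inl (Sum.inr w) ∨ M.Adj (Sum.inl (Sum.inr w)) s) := by
    intro w
    rcases hS (Sum.inl (Sum.inr w)) with h | ⟨s, hs, hadj⟩
    · exact ⟨_, h, Or.inl rfl⟩
    · exact ⟨s, hs, Or.inr hadj⟩
  choose f hfS hf using hchoice
  have hAdj : ∀ (w : Fin p) (s), M.Adj (Sum.inl (Sum.inr w)) s →
      ∃ e : H.edgeSet, s = Sum.inr e ∧ Sum.inr w ∈ (e : Sym2 (V ⊕ Fin p)) := by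
    rintro w (x | e) hadj
    · exact absurd hadj (by exact fun h => h)
    · exact ⟨e, rfl, hadj⟩
  have hinj : Function.Injective f := by
    intro w w' h
    rcases hf w with h1 | h1 <;> rcases hf w' with h2 | h2
    · rw [h1, h2] at h; exact Sum.inr.inj (Sum.inl.inj h)
    · obtain ⟨e, he, -⟩ := hAdj _ _ h2
      rw [← h, h1] at he
      exact absurd he (by simp)
    · obtain ⟨e, he, -⟩ := hAdj _ _ h1
      rw [h, h2] at he
      exact absurd he (by simp)
    · obtain ⟨e, he, hwe⟩ := hAdj _ _ h1
      obtain ⟨e', he', hwe'⟩ := hAdj _ _ h2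
      have : e = e' := Sum.inr.inj (he ▸ he' ▸ h)
      subst this
      exact huniq e e.2 w w' hwe hwe'
  have : Function.Injective (fun w : Fin p => (⟨f w, hfS w⟩ : S)) := by
    intro w w' h
    exact hinj (congrArg Subtype.val h)
  calc p = Nat.card (Fin p) := by rw [Nat.card_eq_fintype_card, Fintype.card_fin]
    _ ≤ Nat.card S := Nat.card_le_card_of_injective _ this
    _ = S.ncard := Nat.card_coe_set_eq S
end

section
/- Let G be a finite connected simple graph of order n ≥ 2 and let p < n be a positive integer. Then ⌈(n+p)/2⌉ ≤ γ(M(G + K̄_p)) ≤ n, where G + K̄_p is the join of G with the edgeless graph on p vertices and γ denotes the domination number. -/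
/-- For a connected graph `G` of order `n ≥ 2` and `0 < p < n`,
`⌈(n+p)/2⌉ ≤ γ(M(G + K̄_p)) ≤ n`. -/
theorem domNum_middle_join_small_bounds {V : Type*} [Fintype V] (G : SimpleGraph V) (n p : ℕ)
    (hord : Fintype.card V = n) (hn : 2 ≤ n) (hconn : G.Connected)
    (hp0 : 0 < p) (hp : p < n) :
    (n + p + 1) / 2 ≤ domNum (middleGraph (graphJoin G (⊥ : SimpleGraph (Fin p)))) ∧
    domNum (middleGraph (graphJoin G (⊥ : SimpleGraph (Fin p)))) ≤ n := by
  classical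
  set H : SimpleGraph (V ⊕ Fin p) := graphJoin G (⊥ : SimpleGraph (Fin p)) with hHdef
  set M : SimpleGraph ((V ⊕ Fin p) ⊕ H.edgeSet) := middleGraph H with hMdef
  -- injection from Fin p to V
  obtain ⟨ι⟩ : Nonempty (Fin p ↪ V) := by
    apply Function.Embedding.nonempty_of_card_le
    simp [hord]; omega
  -- the join edges e_w
  have hadj : ∀ w : Fin p, H.Adj (Sum.inl (ι w)) (Sum.inr w) := fun w => trivial
  let e : Fin p → H.edgeSet := fun w => ⟨s(Sum.inl (ι w), Sum.inr w), hadj w⟩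
  have he_inj : Function.Injective e := by
    intro w w' h
    replace h : (s(Sum.inl (ι w), Sum.inr w) : Sym2 (V ⊕ Fin p)) = s(Sum.inl (ι w'), Sum.inr w') := congrArg Subtype.val h
    rw [Sym2.eq_iff] at h
    rcases h with ⟨h1, h2⟩ | ⟨h1, h2⟩
    · exact Sum.inr.inj h2
    · exact (Sum.inl_ne_inr h1 : False).elim
  -- the dominating set for the upper bound
  let S : Set ((V ⊕ Fin p) ⊕ H.edgeSet) :=
    (Sum.inr ∘ e) '' Set.univ ∪ (Sum.inl ∘ Sum.inl) '' (Set.range ι)ᶜ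
  have hSdom : IsDomSet M S := by
    rintro (⟨v | w⟩ | ⟨E, hE⟩)
    · by_cases hv : v ∈ Set.range ι
      · obtain ⟨w, rfl⟩ := hv
        right
        refine ⟨Sum.inr (e w), Or.inl ⟨w, trivial, rfl⟩, ?_⟩
        show Sum.inl (ι w) ∈ (e w : Sym2 (V ⊕ Fin p))
        simp [e]
      · left; exact Or.inr ⟨v, hv, rfl⟩
    · right
      refine ⟨Sum.inr (e w), Or.inl ⟨w, trivial, rfl⟩, ?_⟩
      show Sum.inr w ∈ (e w : Sym2 (V ⊕ Fin p))
      simp [e]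
    · -- edges
      induction E using Sym2.ind with
      | _ x y =>
        match x, y with
        | Sum.inl u, Sum.inl v =>
          by_cases hu : u ∈ Set.range ι
          · obtain ⟨w, rfl⟩ := hu
            right
            refine ⟨Sum.inr (e w), Or.inl ⟨w, trivial, rfl⟩, ?_⟩
            refine ⟨?_, Sum.inl (ι w), by simp, by simp [e]⟩
            intro hcon
            have : (Sum.inr w : V ⊕ Fin p) ∈ s(Sum.inl (ι w), Sum.inl v) := by
              rw [show (s(Sum.inl (ι w), Sum.inl v) : Sym2 (V ⊕ Fin p)) = (e w : Sym2 (V ⊕ Fin p)) from congrArg Subtype.val hcon]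
              simp [e]
            simp at this
          · right
            refine ⟨Sum.inl (Sum.inl u), Or.inr ⟨u, hu, rfl⟩, ?_⟩
            show Sum.inl u ∈ (_ : Sym2 (V ⊕ Fin p))
            simp
        | Sum.inl u, Sum.inr w =>
          by_cases hEe : (⟨s(Sum.inl u, Sum.inr w), hE⟩ : H.edgeSet) = e w
          · left; exact Or.inl ⟨w, trivial, by rw [hEe]; rfl⟩
          · right
            refine ⟨Sum.inr (e w), Or.inl ⟨w, trivial, rfl⟩, hEe, Sum.inr w, by simp, by simp [e]⟩
        | Sum.inr w, Sum.inl u =>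
          by_cases hEe : (⟨s(Sum.inr w, Sum.inl u), hE⟩ : H.edgeSet) = e w
          · left; exact Or.inl ⟨w, trivial, by rw [hEe]; rfl⟩
          · right
            refine ⟨Sum.inr (e w), Or.inl ⟨w, trivial, rfl⟩, hEe, Sum.inr w, by simp, by simp [e]⟩
        | Sum.inr w, Sum.inr w' =>
          exact absurd hE (by simp [hHdef, graphJoin, SimpleGraph.mem_edgeSet])
  have hScard : S.ncard = n := by
    have hdisj : Disjoint ((Sum.inr ∘ e) '' Set.univ : Set ((V ⊕ Fin p) ⊕ H.edgeSet))
        ((Sum.inl ∘ Sum.inl) '' (Set.range ι)ᶜ) := by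
      rw [Set.disjoint_iff_forall_ne]
      rintro a ⟨w, -, rfl⟩ b ⟨v, -, rfl⟩
      simp
    rw [Set.ncard_union_eq hdisj (Set.toFinite _) (Set.toFinite _)]
    have h1 : ((Sum.inr ∘ e) '' Set.univ : Set ((V ⊕ Fin p) ⊕ H.edgeSet)).ncard = p := by
      rw [Set.ncard_image_of_injective _ (Sum.inr_injective.comp he_inj)]
      simp [Set.ncard_univ]
    have h2 : ((Sum.inl ∘ Sum.inl) '' (Set.range ι)ᶜ : Set ((V ⊕ Fin p) ⊕ H.edgeSet)).ncard = n - p := by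
      rw [Set.ncard_image_of_injective _ (Sum.inl_injective.comp Sum.inl_injective)]
      have : (Set.range ι).ncard = p := by
        rw [← Set.image_univ, Set.ncard_image_of_injective _ ι.injective, Set.ncard_univ]
        simp
      have hc := Set.ncard_add_ncard_compl (Set.range ι)
      rw [this] at hc
      have hcV : Nat.card V = n := by rw [Nat.card_eq_fintype_card, hord]
      omega
    rw [h1, h2]; omega
  have hmem : n ∈ {k : ℕ | ∃ S : Set ((V ⊕ Fin p) ⊕ H.edgeSet), IsDomSet M S ∧ S.ncard = k} :=
    ⟨S, hSdom, hScard⟩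
  constructor
  · apply le_csInf ⟨n, hmem⟩
    rintro k ⟨S, hS, rfl⟩
    -- lower bound: n + p ≤ 2 * S.ncard
    have key : n + p ≤ 2 * S.ncard := by
      -- choose a dominator for each vertex
      have hch : ∀ x : V ⊕ Fin p, ∃ s ∈ S, s = Sum.inl x ∨
          ∃ E : H.edgeSet, s = Sum.inr E ∧ x ∈ (E : Sym2 (V ⊕ Fin p)) := by
        intro x
        rcases hS (Sum.inl x) with h | ⟨s, hsS, hadj⟩
        · exact ⟨Sum.inl x, h, Or.inl rfl⟩
        · match s, hadj with
          | Sum.inr E, hadj => exact ⟨Sum.inr E, hsS, Or.inr ⟨E, rfl, hadj⟩⟩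
      choose f hfS hf using hch
      have hfin : S.Finite := Set.toFinite S
      have hcard : S.ncard = hfin.toFinset.card := Set.ncard_eq_toFinset_card S hfin
      have := Finset.card_le_mul_card_image_of_maps_to
        (f := f) (s := Finset.univ) (t := hfin.toFinset)
        (fun a _ => hfin.mem_toFinset.2 (hfS a)) 2 ?_
      · have huniv : (Finset.univ : Finset (V ⊕ Fin p)).card = n + p := by
          simp [hord]
        omega
      · intro b hb
        clear hb
        obtain (x | ⟨E, hE⟩) := b
        · have hsub : {a ∈ (Finset.univ : Finset (V ⊕ Fin p)) | f a = Sum.inl x} ⊆ {x} := by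
            intro a ha
            simp only [Finset.mem_filter] at ha
            rcases hf a with h | ⟨E, hfE, -⟩
            · rw [ha.2] at h
              simp only [Finset.mem_singleton]
              exact (Sum.inl_injective h).symm
            · rw [ha.2] at hfE
              exact absurd hfE (by simp)
          calc {a ∈ (Finset.univ : Finset (V ⊕ Fin p)) | f a = Sum.inl x}.card
              ≤ ({x} : Finset (V ⊕ Fin p)).card := Finset.card_le_card hsub
            _ ≤ 2 := by simp
        · revert hE
          induction E using Sym2.ind with
          | _ u w =>
            intro hE
            have hsub : {a ∈ (Finset.univ : Finset (V ⊕ Fin p)) |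
                f a = Sum.inr ⟨s(u, w), hE⟩} ⊆ {u, w} := by
              intro a ha
              simp only [Finset.mem_filter] at ha
              rcases hf a with h | ⟨E', hfE, hmem⟩
              · rw [ha.2] at h
                exact absurd h (by simp)
              · rw [ha.2] at hfE
                have : E' = ⟨s(u, w), hE⟩ := Sum.inr_injective hfE.symm
                rw [this] at hmem
                simp only [Sym2.mem_iff] at hmem
                simpa using hmem
            calc {a ∈ (Finset.univ : Finset (V ⊕ Fin p)) |
                  f a = Sum.inr ⟨s(u, w), hE⟩}.card
                ≤ ({u, w} : Finset (V ⊕ Fin p)).card := Finset.card_le_card hsub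
              _ ≤ 2 := Finset.card_le_two
    omega
  · exact Nat.sInf_le hmem
end

section
/- Let G be a finite connected simple graph of order n ≥ 2 and let p < n be a positive integer. Then γ(M(G + K̄_p)) = p + min{ γ(M(G[A])) : A ⊆ V(G), |A| = n − p }, where G[A] denotes the subgraph of G induced on the vertex set A, G + K̄_p is the join of G with the edgeless graph on p vertices, and γ denotes the domination number. -/
namespace MJ
open Sum Set

variable {V : Type*}

lemma isDomSet_univ {W : Type*} (H : SimpleGraph W) : IsDomSet H Set.univ :=
  fun v => Or.inl trivial

lemma domNum_le {W : Type*} {H : SimpleGraph W} {S : Set W} (h : IsDomSet H S) :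
    domNum H ≤ S.ncard := Nat.sInf_le ⟨S, h, rfl⟩

lemma exists_minDomSet {W : Type*} (H : SimpleGraph W) :
    ∃ S : Set W, IsDomSet H S ∧ S.ncard = domNum H := by
  have h : {k : ℕ | ∃ S : Set W, IsDomSet H S ∧ S.ncard = k}.Nonempty :=
    ⟨Set.univ.ncard, Set.univ, isDomSet_univ H, rfl⟩
  exact Nat.sInf_mem h

section
variable (G : SimpleGraph V) (p : ℕ)

abbrev JG : SimpleGraph (V ⊕ Fin p) := graphJoin G (⊥ : SimpleGraph (Fin p))

@[simp] lemma middle_adj_inl_inr {W : Type*} (H : SimpleGraph W) (v : W) (e : H.edgeSet) :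
    (middleGraph H).Adj (inl v) (inr e) ↔ v ∈ (e : Sym2 W) := Iff.rfl

@[simp] lemma middle_adj_inr_inl {W : Type*} (H : SimpleGraph W) (v : W) (e : H.edgeSet) :
    (middleGraph H).Adj (inr e) (inl v) ↔ v ∈ (e : Sym2 W) := Iff.rfl

@[simp] lemma middle_adj_inr_inr {W : Type*} (H : SimpleGraph W) (e f : H.edgeSet) :
    (middleGraph H).Adj (inr e) (inr f) ↔
      e ≠ f ∧ ∃ v, v ∈ (e : Sym2 W) ∧ v ∈ (f : Sym2 W) := Iff.rfl

@[simp] lemma middle_adj_inl_inl {W : Type*} (H : SimpleGraph W) (v w : W) :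
    ¬ (middleGraph H).Adj (inl v) (inl w) := fun h => h

@[simp] lemma join_adj_inl_inl (a b : V) : (JG G p).Adj (inl a) (inl b) ↔ G.Adj a b := Iff.rfl

@[simp] lemma join_adj_inl_inr (a : V) (w : Fin p) : (JG G p).Adj (inl a) (inr w) := trivial

@[simp] lemma join_adj_inr_inl (a : V) (w : Fin p) : (JG G p).Adj (inr w) (inl a) := trivial

@[simp] lemma join_adj_inr_inr (w w' : Fin p) : ¬ (JG G p).Adj (inr w) (inr w') := fun h => h.elim

/-- classification of join edges -/
lemma join_edge_cases (f : (JG G p).edgeSet) :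
    (∃ a b, G.Adj a b ∧ (f : Sym2 (V ⊕ Fin p)) = s(inl a, inl b)) ∨
      (∃ v w, (f : Sym2 (V ⊕ Fin p)) = s(inl v, inr w)) := by
  obtain ⟨e, he⟩ := f
  induction e using Sym2.ind with
  | _ x y =>
    rw [SimpleGraph.mem_edgeSet] at he
    rcases x with a | w <;> rcases y with b | w'
    · exact Or.inl ⟨a, b, he, rfl⟩
    · exact Or.inr ⟨a, w', rfl⟩
    · exact Or.inr ⟨b, w, Sym2.eq_swap⟩
    · exact (he.elim : False).elim

variable {G p}

lemma uniq_inr {f : (JG G p).edgeSet} {w w' : Fin p}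
    (hw : inr w ∈ (f : Sym2 (V ⊕ Fin p))) (hw' : inr w' ∈ (f : Sym2 (V ⊕ Fin p))) : w = w' := by
  rcases join_edge_cases G p f with ⟨a, b, _, hf⟩ | ⟨v, u, hf⟩ <;> rw [hf] at hw hw' <;>
    simp only [Sym2.mem_iff] at hw hw'
  · rcases hw with h | h <;> exact absurd h (by simp)
  · rcases hw with h | h <;> rcases hw' with h' | h' <;> simp_all

lemma uniq_inl_of_join {f : (JG G p).edgeSet} {v v' : V} {w : Fin p}
    (hwf : inr w ∈ (f : Sym2 (V ⊕ Fin p)))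
    (hv : inl v ∈ (f : Sym2 (V ⊕ Fin p))) (hv' : inl v' ∈ (f : Sym2 (V ⊕ Fin p))) : v = v' := by
  rcases join_edge_cases G p f with ⟨a, b, _, hf⟩ | ⟨u, u', hf⟩ <;> rw [hf] at hwf hv hv' <;>
    simp only [Sym2.mem_iff] at hwf hv hv'
  · rcases hwf with h | h <;> exact absurd h (by simp)
  · rcases hv with h | h <;> rcases hv' with h' | h' <;> simp_all


variable (G p) in
def liftV (p : ℕ) (A : Set V) : ↥A → V ⊕ Fin p := fun a => inl (a : V)

lemma liftV_inj (p : ℕ) (A : Set V) : Function.Injective (liftV p A) :=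
  fun a b h => Subtype.ext (inl.inj h)

lemma mem_mapE {p : ℕ} {A : Set V} {e : Sym2 ↥A} {a : ↥A} :
    liftV p A a ∈ Sym2.map (liftV p A) e ↔ a ∈ e := by
  rw [Sym2.mem_map]
  constructor
  · rintro ⟨b, hb, hba⟩
    rwa [liftV_inj p A hba] at hb
  · exact fun h => ⟨a, h, rfl⟩

lemma mapE_all_inl {p : ℕ} {A : Set V} {e : Sym2 ↥A} {y : V ⊕ Fin p}
    (hy : y ∈ Sym2.map (liftV p A) e) : ∃ a : ↥A, a ∈ e ∧ y = inl (a : V) := by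
  rw [Sym2.mem_map] at hy
  obtain ⟨a, ha, rfl⟩ := hy
  exact ⟨a, ha, rfl⟩

lemma mapE_mem_edgeSet {A : Set V} (G : SimpleGraph V) (p : ℕ) (e : (G.induce A).edgeSet) :
    Sym2.map (liftV p A) e.1 ∈ (JG G p).edgeSet := by
  obtain ⟨e, he⟩ := e
  induction e using Sym2.ind with
  | _ a b =>
    rw [SimpleGraph.mem_edgeSet] at he
    show Sym2.map (liftV p A) s(a, b) ∈ _
    rw [Sym2.map_pair_eq]
    exact (SimpleGraph.mem_edgeSet _).mpr he

/-- the embedding of edges of the induced graph into edges of the join -/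
def embE {A : Set V} (G : SimpleGraph V) (p : ℕ) (e : (G.induce A).edgeSet) :
    (JG G p).edgeSet :=
  ⟨Sym2.map (liftV p A) e.1, mapE_mem_edgeSet G p e⟩

lemma embE_inj {A : Set V} (G : SimpleGraph V) (p : ℕ) :
    Function.Injective (embE (A := A) G p) := by
  intro e f h
  exact Subtype.ext (Sym2.map.injective (liftV_inj p A) (congrArg Subtype.val h))

lemma edge_of_mapE {A : Set V} {e₀ : Sym2 ↥A} (G : SimpleGraph V) (p : ℕ)
    (f : (JG G p).edgeSet)
    (hf : (f : Sym2 (V ⊕ Fin p)) = Sym2.map (liftV p A) e₀) :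
    e₀ ∈ (G.induce A).edgeSet := by
  obtain ⟨f, hfe⟩ := f
  induction e₀ using Sym2.ind with
  | _ a b =>
    simp only at hf
    subst hf
    rw [Sym2.map_pair_eq, SimpleGraph.mem_edgeSet] at hfe
    exact (SimpleGraph.mem_edgeSet _).mpr hfe

lemma uniq_inl_of_not_range {G : SimpleGraph V} {p : ℕ} {A : Set V} {f : (JG G p).edgeSet} {a a' : V}
    (hnr : (f : Sym2 (V ⊕ Fin p)) ∉ Set.range (Sym2.map (liftV p A)))
    (hv : inl a ∈ (f : Sym2 (V ⊕ Fin p))) (hv' : inl a' ∈ (f : Sym2 (V ⊕ Fin p)))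
    (ha : a ∈ A) (ha' : a' ∈ A) : a = a' := by
  rcases join_edge_cases G p f with ⟨x, y, hadj, hf⟩ | ⟨v, w, hf⟩
  · by_cases hxy : x ∈ A ∧ y ∈ A
    · exfalso
      apply hnr
      refine ⟨s(⟨x, hxy.1⟩, ⟨y, hxy.2⟩), ?_⟩
      rw [hf]
      rfl
    · rw [hf] at hv hv'
      simp only [Sym2.mem_iff] at hv hv'
      rcases hv with h | h <;> rcases hv' with h' | h' <;>
        (try (exact (inl.inj h).symm ▸ (inl.inj h').symm ▸ rfl)) <;>
        · exfalso
          apply hxy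
          constructor <;> [skip; skip] <;> first
            | (rw [← inl.inj h]; assumption)
            | (rw [← inl.inj h']; assumption)
  · refine uniq_inl_of_join (w := w) ?_ hv hv'
    rw [hf]; simp


lemma upper [Fintype V] (G : SimpleGraph V) (p : ℕ) (A : Set V) (hA : Aᶜ.ncard = p) :
    domNum (middleGraph (JG G p)) ≤ p + domNum (middleGraph (G.induce A)) := by
  classical
  obtain ⟨DA, hDA, hcard⟩ := exists_minDomSet (middleGraph (G.induce A))
  have hAcard : Nat.card ↥(Aᶜ) = p := by rw [Nat.card_coe_set_eq, hA]
  let eC : ↥(Aᶜ) ≃ Fin p := Finite.equivFinOfCardEq hAcard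
  let ι : (↥A ⊕ (G.induce A).edgeSet) → ((V ⊕ Fin p) ⊕ (JG G p).edgeSet) :=
    Sum.map (liftV p A) (embE G p)
  have hι : Function.Injective ι :=
    Function.Injective.sumMap (liftV_inj p A) (embE_inj G p)
  let F : Fin p → ((V ⊕ Fin p) ⊕ (JG G p).edgeSet) := fun i =>
    inr ⟨s(inl ((eC.symm i : ↥(Aᶜ)) : V), inr i), (SimpleGraph.mem_edgeSet _).mpr trivial⟩
  have hFmem : ∀ i : Fin p, inr i ∈ ((⟨s(inl ((eC.symm i : ↥(Aᶜ)) : V), inr i),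
      (SimpleGraph.mem_edgeSet _).mpr trivial⟩ : (JG G p).edgeSet) : Sym2 (V ⊕ Fin p)) := by
    intro i; simp
  have hFinj : Function.Injective F := by
    intro i j hij
    have he := inr.inj hij
    have h1 := hFmem i
    have h2 := hFmem j
    rw [← he] at h2
    exact uniq_inr h1 h2
  set D : Set ((V ⊕ Fin p) ⊕ (JG G p).edgeSet) := ι '' DA ∪ Set.range F with hD
  have hdom : IsDomSet (middleGraph (JG G p)) D := by
    rintro ((v | w) | f)
    · by_cases hv : v ∈ A
      · rcases hDA (inl ⟨v, hv⟩) with hmem | ⟨s, hs, hadj⟩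
        · exact Or.inl (Set.mem_union_left _ ⟨inl ⟨v, hv⟩, hmem, rfl⟩)
        · rcases s with a | e
          · exact absurd hadj (middle_adj_inl_inl _ _ _)
          · refine Or.inr ⟨ι (inr e), Set.mem_union_left _ ⟨inr e, hs, rfl⟩, ?_⟩
            exact mem_mapE.mpr hadj
      · refine Or.inr ⟨F (eC ⟨v, hv⟩), Set.mem_union_right _ ⟨eC ⟨v, hv⟩, rfl⟩, ?_⟩
        show inl v ∈ _
        simp only [F, Equiv.symm_apply_apply]
        simp
    · refine Or.inr ⟨F w, Set.mem_union_right _ ⟨w, rfl⟩, ?_⟩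
      show inr w ∈ _
      simp [F]
    · rcases join_edge_cases G p f with ⟨a, b, hab, hf⟩ | ⟨v, w, hf⟩
      · by_cases ha : a ∈ A
        · by_cases hb : b ∈ A
          · set e' : (G.induce A).edgeSet :=
              ⟨s(⟨a, ha⟩, ⟨b, hb⟩), (SimpleGraph.mem_edgeSet _).mpr hab⟩ with he'
            have hfe : f = embE G p e' := by
              refine Subtype.ext ?_
              rw [hf]
              show _ = Sym2.map (liftV p A) s(⟨a, ha⟩, ⟨b, hb⟩)
              rw [Sym2.map_pair_eq]
              rfl
            rcases hDA (inr e') with hmem | ⟨s, hs, hadj⟩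
            · exact Or.inl (Set.mem_union_left _ ⟨inr e', hmem, by rw [hfe]; rfl⟩)
            · rcases s with a' | e''
              · refine Or.inr ⟨ι (inl a'), Set.mem_union_left _ ⟨inl a', hs, rfl⟩, ?_⟩
                show liftV p A a' ∈ (f : Sym2 (V ⊕ Fin p))
                rw [hfe]
                exact mem_mapE.mpr hadj
              · refine Or.inr ⟨ι (inr e''), Set.mem_union_left _ ⟨inr e'', hs, rfl⟩, ?_⟩
                obtain ⟨hne, u, hu1, hu2⟩ := hadj
                refine ⟨?_, liftV p A u, ?_, ?_⟩
                · exact fun h => hne (embE_inj G p (hfe.symm.trans h))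
                · rw [hfe]; exact mem_mapE.mpr hu1
                · exact mem_mapE.mpr hu2
          · refine Or.inr ⟨F (eC ⟨b, hb⟩), Set.mem_union_right _ ⟨eC ⟨b, hb⟩, rfl⟩, ?_⟩
            refine ⟨?_, inl b, ?_, ?_⟩
            · intro h
              have hv := congrArg Subtype.val h
              rw [hf, Equiv.symm_apply_apply] at hv
              simp [Sym2.eq_iff] at hv
            · rw [hf]; simp
            · show inl b ∈ (↑(⟨s(inl ((eC.symm (eC ⟨b, hb⟩) : ↥(Aᶜ)) : V), inr (eC ⟨b, hb⟩)),
                (SimpleGraph.mem_edgeSet _).mpr trivial⟩ : (JG G p).edgeSet) : Sym2 (V ⊕ Fin p))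
              rw [Equiv.symm_apply_apply]
              simp
        · refine Or.inr ⟨F (eC ⟨a, ha⟩), Set.mem_union_right _ ⟨eC ⟨a, ha⟩, rfl⟩, ?_⟩
          refine ⟨?_, inl a, ?_, ?_⟩
          · intro h
            have hv := congrArg Subtype.val h
            rw [hf, Equiv.symm_apply_apply] at hv
            simp [Sym2.eq_iff] at hv
          · rw [hf]; simp
          · show inl a ∈ (↑(⟨s(inl ((eC.symm (eC ⟨a, ha⟩) : ↥(Aᶜ)) : V), inr (eC ⟨a, ha⟩)),
              (SimpleGraph.mem_edgeSet _).mpr trivial⟩ : (JG G p).edgeSet) : Sym2 (V ⊕ Fin p))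
            rw [Equiv.symm_apply_apply]
            simp
      · by_cases hfw : f = (⟨s(inl ((eC.symm w : ↥(Aᶜ)) : V), inr w),
            (SimpleGraph.mem_edgeSet _).mpr trivial⟩ : (JG G p).edgeSet)
        · exact Or.inl (Set.mem_union_right _ ⟨w, by rw [hfw]⟩)
        · refine Or.inr ⟨F w, Set.mem_union_right _ ⟨w, rfl⟩, ?_⟩
          exact ⟨fun h => hfw h, inr w, by rw [hf]; simp, hFmem w⟩
  have h1 : (ι '' DA).ncard = DA.ncard := Set.ncard_image_of_injective _ hι
  have h2 : (Set.range F).ncard = p := by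
    rw [← Set.image_univ, Set.ncard_image_of_injective _ hFinj, Set.ncard_univ,
      Nat.card_eq_fintype_card, Fintype.card_fin]
  calc domNum (middleGraph (JG G p)) ≤ D.ncard := domNum_le hdom
    _ ≤ (ι '' DA).ncard + (Set.range F).ncard := Set.ncard_union_le _ _
    _ = p + domNum (middleGraph (G.induce A)) := by rw [h1, h2, hcard, Nat.add_comm]


lemma lower [Fintype V] (G : SimpleGraph V) (p : ℕ) (hpn : p ≤ Fintype.card V) :
    ∃ A : Set V, A.ncard = Fintype.card V - p ∧
      p + domNum (middleGraph (G.induce A)) ≤ domNum (middleGraph (JG G p)) := by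
  classical
  obtain ⟨D, hD, hDcard⟩ := exists_minDomSet (middleGraph (JG G p))
  set B : Set V := {v | ∃ f : (JG G p).edgeSet, inr f ∈ D ∧ inl v ∈ (f : Sym2 (V ⊕ Fin p)) ∧
    ∃ w : Fin p, inr w ∈ (f : Sym2 (V ⊕ Fin p))} with hBdef
  obtain ⟨C, hCcard, hBC⟩ : ∃ C : Set V, C.ncard = p ∧ (B ⊆ C ∨ C ⊆ B) := by
    by_cases hb : B.ncard ≤ p
    · obtain ⟨C, hBC, -, hC⟩ := Set.exists_subsuperset_card_eq (B.subset_univ) hb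
        (by rw [Set.ncard_univ, Nat.card_eq_fintype_card]; exact hpn)
      exact ⟨C, hC, Or.inl hBC⟩
    · obtain ⟨C, hCB, hC⟩ := Set.exists_subset_card_eq (le_of_lt (not_le.mp hb))
      exact ⟨C, hC, Or.inr hCB⟩
  set A : Set V := Cᶜ with hAdef
  have hAcard : A.ncard = Fintype.card V - p := by
    have h := Set.ncard_add_ncard_compl C
    rw [hCcard, Nat.card_eq_fintype_card] at h
    rw [hAdef]
    omega
  refine ⟨A, hAcard, ?_⟩
  -- the condition used for vertex replacement
  set cond : ↥A → Prop := fun a => ∃ f : (JG G p).edgeSet, inr f ∈ D ∧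
    inl (a : V) ∈ (f : Sym2 (V ⊕ Fin p)) ∧
    (f : Sym2 (V ⊕ Fin p)) ∉ Set.range (Sym2.map (liftV p A)) with hconddef
  set D' : Set (↥A ⊕ (G.induce A).edgeSet) :=
    {x | (∃ a : ↥A, x = inl a ∧ (inl (inl (a : V)) ∈ D ∨ cond a)) ∨
         (∃ e : (G.induce A).edgeSet, x = inr e ∧ inr (embE G p e) ∈ D)} with hD'def
  -- D' dominates the middle graph of the induced graph
  have hdom' : IsDomSet (middleGraph (G.induce A)) D' := by
    rintro (a | e)
    · rcases hD (inl (inl (a : V))) with hmem | ⟨s, hs, hadj⟩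
      · exact Or.inl (Or.inl ⟨a, rfl, Or.inl hmem⟩)
      · rcases s with x | f
        · exact absurd hadj (middle_adj_inl_inl _ _ _)
        · by_cases hr : (f : Sym2 (V ⊕ Fin p)) ∈ Set.range (Sym2.map (liftV p A))
          · obtain ⟨e₀, he₀⟩ := hr
            have hmm : e₀ ∈ (G.induce A).edgeSet := edge_of_mapE G p f he₀.symm
            refine Or.inr ⟨inr ⟨e₀, hmm⟩, Or.inr ⟨⟨e₀, hmm⟩, rfl, ?_⟩, ?_⟩
            · have : embE G p ⟨e₀, hmm⟩ = f := Subtype.ext he₀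
              rwa [this]
            · show a ∈ e₀
              have hadj' : inl (a : V) ∈ (f : Sym2 (V ⊕ Fin p)) := hadj
              rw [← he₀] at hadj'
              exact mem_mapE.mp hadj'

          · exact Or.inl (Or.inl ⟨a, rfl, Or.inr ⟨f, hs, hadj, hr⟩⟩)
    · rcases hD (inr (embE G p e)) with hmem | ⟨s, hs, hadj⟩
      · exact Or.inl (Or.inr ⟨e, rfl, hmem⟩)
      · rcases s with x | f
        · obtain ⟨a, hae, rfl⟩ := mapE_all_inl hadj
          exact Or.inr ⟨inl a, Or.inl ⟨a, rfl, Or.inl hs⟩, hae⟩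
        · obtain ⟨hne, y, hy1, hy2⟩ := hadj
          obtain ⟨a, hae, rfl⟩ := mapE_all_inl hy1
          by_cases hr : (f : Sym2 (V ⊕ Fin p)) ∈ Set.range (Sym2.map (liftV p A))
          · obtain ⟨e₀, he₀⟩ := hr
            have hmm : e₀ ∈ (G.induce A).edgeSet := edge_of_mapE G p f he₀.symm
            have hembf : embE G p ⟨e₀, hmm⟩ = f := Subtype.ext he₀
            refine Or.inr ⟨inr ⟨e₀, hmm⟩, Or.inr ⟨⟨e₀, hmm⟩, rfl, by rwa [hembf]⟩, ?_, a, hae, ?_⟩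
            · intro h
              exact hne (h ▸ hembf)
            · show a ∈ e₀
              rw [← he₀] at hy2
              exact mem_mapE.mp hy2

          · exact Or.inr ⟨inl a, Or.inl ⟨a, rfl, Or.inr ⟨f, hs, hy2, hr⟩⟩, hae⟩
  -- the injection Φ₁ from D' into D
  set Φ₁ : (↥A ⊕ (G.induce A).edgeSet) → ((V ⊕ Fin p) ⊕ (JG G p).edgeSet) := fun x =>
    match x with
    | inl a => if h : cond a then inr h.choose else inl (inl (a : V))
    | inr e => inr (embE G p e) with hΦ₁def
  have hΦ₁mem : ∀ x ∈ D', Φ₁ x ∈ D := by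
    rintro x (⟨a, rfl, ha⟩ | ⟨e, rfl, he⟩)
    · show (if h : cond a then inr h.choose else inl (inl (a : V))) ∈ D
      by_cases h : cond a
      · rw [dif_pos h]; exact h.choose_spec.1
      · rw [dif_neg h]; exact ha.resolve_right h
    · exact he
  have hpos : ∀ (a : ↥A) (h : cond a), Φ₁ (inl a) = inr (Exists.choose h) :=
    fun a h => dif_pos h
  have hneg : ∀ (a : ↥A), ¬ cond a → Φ₁ (inl a) = inl (inl (a : V)) :=
    fun a h => dif_neg h
  have hembrange : ∀ e : (G.induce A).edgeSet,
      ((embE G p e : (JG G p).edgeSet) : Sym2 (V ⊕ Fin p)) ∈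
        Set.range (Sym2.map (liftV p A)) := fun e => ⟨e.1, rfl⟩
  have hΦ₁inj : Set.InjOn Φ₁ D' := by
    rintro x (⟨a, rfl, ha⟩ | ⟨e, rfl, he⟩) y (⟨a', rfl, ha'⟩ | ⟨e', rfl, he'⟩) hxy
    · by_cases h : cond a <;> by_cases h' : cond a'
      · rw [hpos a h, hpos a' h'] at hxy
        have hff : Exists.choose h = Exists.choose h' := inr.inj hxy
        obtain ⟨hd1, hm1, hr1⟩ := h.choose_spec
        obtain ⟨hd2, hm2, hr2⟩ := h'.choose_spec
        rw [hff] at hm1 hr1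
        have : (a : V) = (a' : V) := uniq_inl_of_not_range hr1 hm1 hm2 a.2 a'.2
        rw [Subtype.ext this]
      · rw [hpos a h, hneg a' h'] at hxy
        exact absurd hxy (by simp)
      · rw [hneg a h, hpos a' h'] at hxy
        exact absurd hxy (by simp)
      · rw [hneg a h, hneg a' h'] at hxy
        rw [Subtype.ext (inl.inj (inl.inj hxy))]
    · by_cases h : cond a
      · rw [hpos a h] at hxy
        have hff : Exists.choose h = embE G p e' := inr.inj hxy
        exact absurd (hff ▸ hembrange e') h.choose_spec.2.2
      · rw [hneg a h] at hxy
        exact absurd hxy (by simp)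
    · by_cases h' : cond a'
      · rw [hpos a' h'] at hxy
        have hff : embE G p e = Exists.choose h' := inr.inj hxy
        exact absurd (hff ▸ hembrange e) h'.choose_spec.2.2
      · rw [hneg a' h'] at hxy
        exact absurd hxy (by simp)
    · rw [congrArg inr (embE_inj G p (inr.inj hxy))]
  have hΦval : ∀ x ∈ D', (∃ a : V, Φ₁ x = inl (inl a)) ∨
      (∃ f : (JG G p).edgeSet, Φ₁ x = inr f ∧
        (f : Sym2 (V ⊕ Fin p)) ∈ Set.range (Sym2.map (liftV p A))) ∨
      (∃ (f : (JG G p).edgeSet) (a : ↥A), Φ₁ x = inr f ∧ inr f ∈ D ∧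
        inl (a : V) ∈ (f : Sym2 (V ⊕ Fin p)) ∧
        (f : Sym2 (V ⊕ Fin p)) ∉ Set.range (Sym2.map (liftV p A))) := by
    rintro x (⟨a, rfl, ha⟩ | ⟨e, rfl, he⟩)
    · by_cases h : cond a
      · exact Or.inr (Or.inr ⟨h.choose, a, hpos a h, h.choose_spec.1, h.choose_spec.2.1,
          h.choose_spec.2.2⟩)
      · exact Or.inl ⟨a, hneg a h⟩
    · exact Or.inr (Or.inl ⟨embE G p e, rfl, hembrange e⟩)
  obtain ⟨Φ₂, hΦ₂inj, hΦ₂mem, hΦ₂disj⟩ :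
      ∃ Φ₂ : Fin p → ((V ⊕ Fin p) ⊕ (JG G p).edgeSet),
        Function.Injective Φ₂ ∧ (∀ i, Φ₂ i ∈ D) ∧ ∀ i, Φ₂ i ∉ Φ₁ '' D' := by
    rcases hBC with hBC | hCB
    · -- case B ⊆ C
      have hw : ∀ w : Fin p, ¬ inl (inr w) ∈ D → ∃ f : (JG G p).edgeSet, inr f ∈ D ∧
          inr w ∈ (f : Sym2 (V ⊕ Fin p)) := by
        intro w hnw
        rcases hD (inl (inr w)) with h | ⟨s, hs, hadj⟩
        · exact absurd h hnw
        · rcases s with x | f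
          · exact absurd hadj (middle_adj_inl_inl _ _ _)
          · exact ⟨f, hs, hadj⟩
      refine ⟨fun w => if h : inl (inr w) ∈ D then inl (inr w) else inr (hw w h).choose,
        ?_, ?_, ?_⟩
      · intro i j hij
        dsimp only at hij
        by_cases h : inl (inr i) ∈ D <;> by_cases h' : inl (inr j) ∈ D
        · rw [dif_pos h, dif_pos h'] at hij; exact inr.inj (inl.inj hij)
        · rw [dif_pos h, dif_neg h'] at hij; exact absurd hij (by simp)
        · rw [dif_neg h, dif_pos h'] at hij; exact absurd hij (by simp)
        · rw [dif_neg h, dif_neg h'] at hij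
          have hff := inr.inj hij
          have h1 := (hw i h).choose_spec.2
          have h2 := (hw j h').choose_spec.2
          rw [hff] at h1
          exact uniq_inr h1 h2
      · intro i
        dsimp only
        by_cases h : inl (inr i) ∈ D
        · rw [dif_pos h]; exact h
        · rw [dif_neg h]; exact (hw i h).choose_spec.1
      · rintro i ⟨x, hx, hxe⟩
        dsimp only at hxe
        by_cases h : inl (inr i) ∈ D <;>
          [rw [dif_pos h] at hxe; rw [dif_neg h] at hxe] <;>
          rcases hΦval x hx with ⟨a, hv⟩ | ⟨f, hv, hfr⟩ | ⟨f, a, hv, hfD, hfa, hfr⟩ <;>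
          rw [hv] at hxe
        · exact absurd hxe (by simp)
        · exact absurd hxe (by simp)
        · exact absurd hxe (by simp)
        · exact absurd hxe (by simp)
        · -- f in range but contains inr i
          have hff := inr.inj hxe
          have h2 : inr i ∈ (f : Sym2 (V ⊕ Fin p)) := by
            rw [hff]; exact (hw i h).choose_spec.2
          obtain ⟨e₀, he₀⟩ := hfr
          rw [← he₀] at h2
          obtain ⟨b, -, hb⟩ := mapE_all_inl h2
          exact absurd hb (by simp)
        · -- f contains inl a with a in A, but then a ∈ B ⊆ C
          have hff := inr.inj hxe
          have h2 : inr i ∈ (f : Sym2 (V ⊕ Fin p)) := by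
            rw [hff]; exact (hw i h).choose_spec.2
          have haB : (a : V) ∈ B := ⟨f, hfD, hfa, i, h2⟩
          exact (a.2 : (a : V) ∈ Cᶜ) (hBC haB)
    · -- case C ⊆ B
      have hCp : Nat.card ↥C = p := by rw [Nat.card_coe_set_eq, hCcard]
      let eC : ↥C ≃ Fin p := Finite.equivFinOfCardEq hCp
      have hB' : ∀ c : ↥C, ∃ f : (JG G p).edgeSet, inr f ∈ D ∧
          inl (c : V) ∈ (f : Sym2 (V ⊕ Fin p)) ∧
          ∃ w : Fin p, inr w ∈ (f : Sym2 (V ⊕ Fin p)) := fun c => hCB c.2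
      refine ⟨fun i => inr (hB' (eC.symm i)).choose, ?_, ?_, ?_⟩
      · intro i j hij
        dsimp only at hij
        have hff := inr.inj hij
        obtain ⟨hd1, hm1, w, hw1⟩ := (hB' (eC.symm i)).choose_spec
        obtain ⟨hd2, hm2, -⟩ := (hB' (eC.symm j)).choose_spec
        rw [hff] at hm1 hw1
        have h1 : ((eC.symm i : ↥C) : V) = ((eC.symm j : ↥C) : V) :=
          uniq_inl_of_join hw1 hm1 hm2
        have h2 := eC.symm.injective (Subtype.ext h1)
        exact h2
      · intro i; exact (hB' (eC.symm i)).choose_spec.1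
      · rintro i ⟨x, hx, hxe⟩
        dsimp only at hxe
        rcases hΦval x hx with ⟨a, hv⟩ | ⟨f, hv, hfr⟩ | ⟨f, a, hv, hfD, hfa, hfr⟩ <;>
          rw [hv] at hxe
        · exact absurd hxe (by simp)
        · have hff := inr.inj hxe
          have hw1 : ∃ w : Fin p, inr w ∈ (f : Sym2 (V ⊕ Fin p)) := by
            rw [hff]; exact (hB' (eC.symm i)).choose_spec.2.2
          obtain ⟨w, hw1⟩ := hw1
          obtain ⟨e₀, he₀⟩ := hfr
          rw [← he₀] at hw1
          obtain ⟨b, -, hb⟩ := mapE_all_inl hw1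
          exact absurd hb (by simp)
        · have hff := inr.inj hxe
          have hm1 : inl ((eC.symm i : ↥C) : V) ∈ (f : Sym2 (V ⊕ Fin p)) := by
            rw [hff]; exact (hB' (eC.symm i)).choose_spec.2.1
          have hw1 : ∃ w : Fin p, inr w ∈ (f : Sym2 (V ⊕ Fin p)) := by
            rw [hff]; exact (hB' (eC.symm i)).choose_spec.2.2
          obtain ⟨w, hw1⟩ := hw1
          have h1 : ((eC.symm i : ↥C) : V) = (a : V) := uniq_inl_of_join hw1 hm1 hfa
          exact (a.2 : (a : V) ∈ Cᶜ) (h1 ▸ (eC.symm i).2)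
  -- counting
  have himg1 : Φ₁ '' D' ⊆ D := by rintro y ⟨x, hx, rfl⟩; exact hΦ₁mem x hx
  have hsub : Φ₁ '' D' ∪ Set.range Φ₂ ⊆ D :=
    Set.union_subset himg1 (by rintro y ⟨i, rfl⟩; exact hΦ₂mem i)
  have hdisj : Disjoint (Φ₁ '' D') (Set.range Φ₂) := by
    rw [Set.disjoint_right]
    rintro y ⟨i, rfl⟩
    exact hΦ₂disj i
  have hc1 : (Φ₁ '' D').ncard = D'.ncard := Set.ncard_image_of_injOn hΦ₁inj
  have hc2 : (Set.range Φ₂).ncard = p := by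
    rw [← Set.image_univ, Set.ncard_image_of_injective _ hΦ₂inj, Set.ncard_univ,
      Nat.card_eq_fintype_card, Fintype.card_fin]
  have hcount : D'.ncard + p ≤ D.ncard := by
    have h := Set.ncard_le_ncard hsub (Set.toFinite _)
    rwa [Set.ncard_union_eq hdisj (Set.toFinite _) (Set.toFinite _), hc1, hc2] at h
  have hle : domNum (middleGraph (G.induce A)) ≤ D'.ncard := domNum_le hdom'
  omega

end
end MJ

/-- For a connected graph `G` of order `n ≥ 2` and `0 < p < n`,
`γ(M(G + K̄_p)) = p + min{γ(M(G[A])) : A ⊆ V(G), |A| = n - p}`. -/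
theorem domNum_middle_join_small_eq {V : Type*} [Fintype V] (G : SimpleGraph V) (n p : ℕ)
    (hord : Fintype.card V = n) (hn : 2 ≤ n) (hconn : G.Connected)
    (hp0 : 0 < p) (hp : p < n) :
    domNum (middleGraph (graphJoin G (⊥ : SimpleGraph (Fin p)))) =
      p + sInf {k : ℕ | ∃ A : Set V, A.ncard = n - p ∧
        domNum (middleGraph (G.induce A)) = k} := by
  have hne : {k : ℕ | ∃ A : Set V, A.ncard = n - p ∧
      domNum (middleGraph (G.induce A)) = k}.Nonempty := by
    obtain ⟨A, -, hA⟩ := Set.exists_subset_card_eq (s := (Set.univ : Set V)) (n := n - p)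
      (by rw [Set.ncard_univ, Nat.card_eq_fintype_card, hord]; omega)
    exact ⟨_, A, hA, rfl⟩
  apply le_antisymm
  · obtain ⟨A0, hA0card, hA0⟩ := Nat.sInf_mem hne
    have hA0c : A0ᶜ.ncard = p := by
      have h := Set.ncard_add_ncard_compl A0
      rw [hA0card, Nat.card_eq_fintype_card, hord] at h
      omega
    calc domNum (middleGraph (graphJoin G (⊥ : SimpleGraph (Fin p))))
        ≤ p + domNum (middleGraph (G.induce A0)) := MJ.upper G p A0 hA0c
      _ = _ := by rw [hA0]
  · obtain ⟨A1, hA1card, hle⟩ := MJ.lower G p (le_of_lt (hord ▸ hp))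
    rw [hord] at hA1card
    have hsle : sInf {k : ℕ | ∃ A : Set V, A.ncard = n - p ∧
        domNum (middleGraph (G.induce A)) = k} ≤ domNum (middleGraph (G.induce A1)) :=
      Nat.sInf_le ⟨A1, hA1card, rfl⟩
    have hle' : p + domNum (middleGraph (G.induce A1)) ≤
        domNum (middleGraph (graphJoin G (⊥ : SimpleGraph (Fin p)))) := hle
    omega
end

section
/- For any star graph K_{1,n} on n + 1 ≥ 2 vertices, γ(M(K_{1,n})) = n, where γ denotes the domination number. -/
/-- The star graph `K_{1,n}`: the vertex `0` is the center, adjacent to the `n` leaves. -/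
def starGraph (n : ℕ) : SimpleGraph (Fin (n + 1)) where
  Adj x y := x ≠ y ∧ (x = 0 ∨ y = 0)
  symm := by
    constructor
    rintro x y ⟨h1, h2⟩
    exact ⟨h1.symm, h2.symm⟩
  loopless := by
    constructor
    rintro x ⟨h1, _⟩
    exact h1 rfl

lemma star_edge_eq {n : ℕ} {e : Sym2 (Fin (n + 1))} (he : e ∈ (starGraph n).edgeSet)
    {i : Fin (n + 1)} (hi : i ∈ e) (h0 : i ≠ 0) : e = s(0, i) := by
  induction e using Sym2.ind with
  | _ a b =>
    rw [SimpleGraph.mem_edgeSet] at he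
    obtain ⟨hab, h⟩ := he
    rw [Sym2.mem_iff] at hi
    rcases hi with rfl | rfl
    · rcases h with h | h
      · exact absurd h h0
      · subst h; rw [Sym2.eq_swap]
    · rcases h with h | h
      · subst h; rfl
      · exact absurd h h0

/-- The edge `{0, i.succ}` of the star graph. -/
def starEdge (n : ℕ) (i : Fin n) : (starGraph n).edgeSet :=
  ⟨s(0, i.succ), by
    rw [SimpleGraph.mem_edgeSet]
    exact ⟨(Fin.succ_ne_zero i).symm, Or.inl rfl⟩⟩

lemma starEdge_injective (n : ℕ) : Function.Injective (starEdge n) := by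
  intro i j h
  have h2 : s((0 : Fin (n + 1)), i.succ) = s(0, j.succ) := congrArg Subtype.val h
  rw [Sym2.congr_right] at h2
  exact Fin.succ_injective n h2

lemma star_edge_surj {n : ℕ} (e : (starGraph n).edgeSet) : ∃ i : Fin n, e = starEdge n i := by
  obtain ⟨x, hx, hx0⟩ : ∃ x, x ∈ (e : Sym2 (Fin (n + 1))) ∧ x ≠ 0 := by
    obtain ⟨e, he⟩ := e
    induction e using Sym2.ind with
    | _ a b =>
      rw [SimpleGraph.mem_edgeSet] at he
      obtain ⟨hab, h | h⟩ := he
      · exact ⟨b, Sym2.mem_mk_right _ _, by rw [h] at hab; exact fun hb => hab (hb ▸ rfl)⟩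
      · exact ⟨a, Sym2.mem_mk_left _ _, by rw [h] at hab; exact hab⟩
  refine ⟨x.pred hx0, Subtype.ext ?_⟩
  have : (starEdge n (x.pred hx0) : Sym2 (Fin (n + 1))) = s(0, (x.pred hx0).succ) := rfl
  rw [this, Fin.succ_pred]
  exact star_edge_eq e.2 hx hx0

/-- For any star graph `K_{1,n}` on `n + 1 ≥ 2` vertices,
`γ(M(K_{1,n})) = n`. -/
theorem domNum_middle_star (n : ℕ) (hn : 1 ≤ n) :
    domNum (middleGraph (starGraph n)) = n := by
  classical
  set V := Fin (n + 1) ⊕ (starGraph n).edgeSet with hV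
  have hmemcen : ∀ i : Fin n, (0 : Fin (n + 1)) ∈ (starEdge n i : Sym2 (Fin (n + 1))) :=
    fun i => Sym2.mem_mk_left _ _
  have hmemsucc : ∀ i : Fin n, (i.succ : Fin (n + 1)) ∈ (starEdge n i : Sym2 (Fin (n + 1))) :=
    fun i => Sym2.mem_mk_right _ _
  -- upper bound: the set of all edges dominates
  have hmem : n ∈ {k : ℕ | ∃ S : Set V, IsDomSet (middleGraph (starGraph n)) S ∧ S.ncard = k} := by
    refine ⟨Set.range (fun i => Sum.inr (starEdge n i)), ?_, ?_⟩
    · rintro (v | e)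
      · right
        by_cases hv : v = 0
        · exact ⟨Sum.inr (starEdge n ⟨0, hn⟩), ⟨⟨0, hn⟩, rfl⟩, hv ▸ hmemcen ⟨0, hn⟩⟩
        · refine ⟨Sum.inr (starEdge n (v.pred hv)), ⟨_, rfl⟩, ?_⟩
          show v ∈ (starEdge n (v.pred hv) : Sym2 (Fin (n + 1)))
          have := hmemsucc (v.pred hv)
          rwa [Fin.succ_pred] at this
      · left
        obtain ⟨i, rfl⟩ := star_edge_surj e
        exact ⟨i, rfl⟩
    · have hinj : Function.Injective (fun i => (Sum.inr (starEdge n i) : V)) :=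
        fun i j h => starEdge_injective n (Sum.inr_injective h)
      rw [← Nat.card_coe_set_eq, Nat.card_range_of_injective hinj, Nat.card_eq_fintype_card,
        Fintype.card_fin]
  -- lower bound
  have hlb : ∀ k ∈ {k : ℕ | ∃ S : Set V,
      IsDomSet (middleGraph (starGraph n)) S ∧ S.ncard = k}, n ≤ k := by
    rintro k ⟨S, hS, rfl⟩
    have hchoice : ∀ i : Fin n, ∃ s : V, s ∈ S ∧
        (s = Sum.inl i.succ ∨ s = Sum.inr (starEdge n i)) := by
      intro i
      rcases hS (Sum.inl i.succ) with h | ⟨s, hsS, hadj⟩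
      · exact ⟨Sum.inl i.succ, h, Or.inl rfl⟩
      · refine ⟨s, hsS, ?_⟩
        rcases s with w | e
        · exact absurd hadj (by simp [middleGraph])
        · right
          have hmem : (i.succ : Fin (n + 1)) ∈ (e : Sym2 (Fin (n + 1))) := hadj
          have : (e : Sym2 (Fin (n + 1))) = s(0, i.succ) :=
            star_edge_eq e.2 hmem (Fin.succ_ne_zero i)
          exact congrArg Sum.inr (Subtype.ext this)
    choose g hgS hgspec using hchoice
    have hginj : Function.Injective g := by
      intro i j hij
      rcases hgspec i with hi | hi <;> rcases hgspec j with hj | hj <;>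
        rw [hi, hj] at hij
      · exact Fin.succ_injective n (Sum.inl_injective hij)
      · exact absurd hij (by simp)
      · exact absurd hij (by simp)
      · exact starEdge_injective n (Sum.inr_injective hij)
    calc n = Nat.card (Fin n) := by simp
      _ = Nat.card (Set.range g) := (Nat.card_range_of_injective hginj).symm
      _ = (Set.range g).ncard := Nat.card_coe_set_eq _
      _ ≤ S.ncard := Set.ncard_le_ncard (Set.range_subset_iff.mpr hgS) (Set.toFinite S)
  exact le_antisymm (Nat.sInf_le hmem) (le_csInf ⟨n, hmem⟩ hlb)
end

section
/- For any double star graph S_{1,n,n} on 2n + 1 vertices with n ≥ 2, γ(M(S_{1,n,n})) = n + 1, where γ denotes the domination number. -/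
/-- The double star graph `S_{1,n,n}`: the center `none` is adjacent to the `n` middle
vertices `some (inl i)`, and each middle vertex `some (inl i)` is adjacent to the
corresponding leaf `some (inr i)`. -/
def doubleStar (n : ℕ) : SimpleGraph (Option (Fin n ⊕ Fin n)) where
  Adj x y :=
    (∃ i, x = none ∧ y = some (Sum.inl i)) ∨
    (∃ i, y = none ∧ x = some (Sum.inl i)) ∨
    (∃ i, x = some (Sum.inl i) ∧ y = some (Sum.inr i)) ∨
    (∃ i, y = some (Sum.inl i) ∧ x = some (Sum.inr i))
  symm := by
    constructor
    rintro x y (⟨i, h1, h2⟩ | ⟨i, h1, h2⟩ | ⟨i, h1, h2⟩ | ⟨i, h1, h2⟩)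
    · exact Or.inr (Or.inl ⟨i, h1, h2⟩)
    · exact Or.inl ⟨i, h1, h2⟩
    · exact Or.inr (Or.inr (Or.inr ⟨i, h1, h2⟩))
    · exact Or.inr (Or.inr (Or.inl ⟨i, h1, h2⟩))
  loopless := by
    constructor
    rintro x (⟨i, h1, h2⟩ | ⟨i, h1, h2⟩ | ⟨i, h1, h2⟩ | ⟨i, h1, h2⟩) <;> simp_all

def eE (n : ℕ) (i : Fin n) : (doubleStar n).edgeSet :=
  ⟨s(none, some (Sum.inl i)),
    (SimpleGraph.mem_edgeSet _).mpr (Or.inl ⟨i, rfl, rfl⟩)⟩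

def fE (n : ℕ) (i : Fin n) : (doubleStar n).edgeSet :=
  ⟨s(some (Sum.inl i), some (Sum.inr i)),
    (SimpleGraph.mem_edgeSet _).mpr (Or.inr (Or.inr (Or.inl ⟨i, rfl, rfl⟩)))⟩

lemma fE_inj {n : ℕ} {i j : Fin n} (h : fE n i = fE n j) : i = j := by
  have := congrArg Subtype.val h
  simp [fE, Sym2.eq_iff] at this
  exact this

lemma eE_ne_fE {n : ℕ} (i j : Fin n) : eE n i ≠ fE n j := by
  intro h
  have := congrArg Subtype.val h
  simp [eE, fE, Sym2.eq_iff] at this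

lemma edge_cases {n : ℕ} (e : (doubleStar n).edgeSet) :
    (∃ i, e = eE n i) ∨ (∃ i, e = fE n i) := by
  obtain ⟨e, he⟩ := e
  induction e using Sym2.inductionOn with
  | hf a b =>
    rw [SimpleGraph.mem_edgeSet] at he
    rcases he with ⟨i, h1, h2⟩ | ⟨i, h1, h2⟩ | ⟨i, h1, h2⟩ | ⟨i, h1, h2⟩
    · exact Or.inl ⟨i, Subtype.ext (by subst h1; subst h2; rfl)⟩
    · exact Or.inl ⟨i, Subtype.ext (by subst h1; subst h2; exact Sym2.eq_swap)⟩
    · exact Or.inr ⟨i, Subtype.ext (by subst h1; subst h2; rfl)⟩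
    · exact Or.inr ⟨i, Subtype.ext (by subst h1; subst h2; exact Sym2.eq_swap)⟩

/-- For any double star graph `S_{1,n,n}` on `2n + 1` vertices with `n ≥ 2`,
`γ(M(S_{1,n,n})) = n + 1`. -/
theorem domNum_middle_doubleStar (n : ℕ) (hn : 2 ≤ n) :
    domNum (middleGraph (doubleStar n)) = n + 1 := by
  classical
  have hmem : (n + 1) ∈
      {k : ℕ | ∃ S : Set (Option (Fin n ⊕ Fin n) ⊕ (doubleStar n).edgeSet),
        IsDomSet (middleGraph (doubleStar n)) S ∧ S.ncard = k} := by
    refine ⟨insert (Sum.inl none) (Set.range fun i => Sum.inr (fE n i)), ?_, ?_⟩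
    · intro v
      match v with
      | Sum.inl none => exact Or.inl (Set.mem_insert _ _)
      | Sum.inl (some (Sum.inl i)) =>
        refine Or.inr ⟨Sum.inr (fE n i), Set.mem_insert_of_mem _ ⟨i, rfl⟩, ?_⟩
        show some (Sum.inl i) ∈ (fE n i : Sym2 (Option (Fin n ⊕ Fin n)))
        simp [fE]
      | Sum.inl (some (Sum.inr i)) =>
        refine Or.inr ⟨Sum.inr (fE n i), Set.mem_insert_of_mem _ ⟨i, rfl⟩, ?_⟩
        show some (Sum.inr i) ∈ (fE n i : Sym2 (Option (Fin n ⊕ Fin n)))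
        simp [fE]
      | Sum.inr e =>
        rcases edge_cases e with ⟨i, rfl⟩ | ⟨i, rfl⟩
        · refine Or.inr ⟨Sum.inr (fE n i), Set.mem_insert_of_mem _ ⟨i, rfl⟩, ?_⟩
          show eE n i ≠ fE n i ∧ ∃ v, v ∈ (eE n i : Sym2 (Option (Fin n ⊕ Fin n))) ∧ v ∈ (fE n i : Sym2 (Option (Fin n ⊕ Fin n)))
          exact ⟨eE_ne_fE i i, some (Sum.inl i), by simp [eE], by simp [fE]⟩
        · exact Or.inl (Set.mem_insert_of_mem _ ⟨i, rfl⟩)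
    · have hinj : Function.Injective fun i : Fin n => (Sum.inr (fE n i) :
          Option (Fin n ⊕ Fin n) ⊕ (doubleStar n).edgeSet) := by
        intro i j h
        exact fE_inj (Sum.inr.inj h)
      rw [Set.ncard_insert_of_notMem (by simp)]
      congr 1
      rw [← Set.image_univ, Set.ncard_image_of_injective _ hinj, Set.ncard_univ,
        Nat.card_eq_fintype_card, Fintype.card_fin]
  have hlb : ∀ k ∈ {k : ℕ | ∃ S : Set (Option (Fin n ⊕ Fin n) ⊕ (doubleStar n).edgeSet),
      IsDomSet (middleGraph (doubleStar n)) S ∧ S.ncard = k}, n + 1 ≤ k := by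
    rintro k ⟨S, hS, rfl⟩
    have hleaf : ∀ i : Fin n,
        Sum.inl (some (Sum.inr i)) ∈ S ∨ Sum.inr (fE n i) ∈ S := by
      intro i
      rcases hS (Sum.inl (some (Sum.inr i))) with h | ⟨s, hsS, hadj⟩
      · exact Or.inl h
      · match s with
        | Sum.inl w => exact absurd hadj (by simp [middleGraph])
        | Sum.inr e =>
          have hmem : (some (Sum.inr i) : Option (Fin n ⊕ Fin n)) ∈ (e : Sym2 _) := hadj
          rcases edge_cases e with ⟨j, rfl⟩ | ⟨j, rfl⟩
          · exfalso; simp [eE] at hmem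
          · have : j = i := by have h' : i = j := by simpa [fE] using hmem
                               exact h'.symm
            exact Or.inr (this ▸ hsS)
    have hcenter : Sum.inl (none : Option (Fin n ⊕ Fin n)) ∈ S ∨
        ∃ j, Sum.inr (eE n j) ∈ S := by
      rcases hS (Sum.inl none) with h | ⟨s, hsS, hadj⟩
      · exact Or.inl h
      · match s with
        | Sum.inl w => exact absurd hadj (by simp [middleGraph])
        | Sum.inr e =>
          have hmem : (none : Option (Fin n ⊕ Fin n)) ∈ (e : Sym2 _) := hadj
          rcases edge_cases e with ⟨j, rfl⟩ | ⟨j, rfl⟩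
          · exact Or.inr ⟨j, hsS⟩
          · exfalso; simp [fE] at hmem
    set g : Fin n → Option (Fin n ⊕ Fin n) ⊕ (doubleStar n).edgeSet :=
      fun i => if Sum.inl (some (Sum.inr i)) ∈ S then Sum.inl (some (Sum.inr i))
               else Sum.inr (fE n i) with hg
    have hgS : ∀ i, g i ∈ S := by
      intro i
      by_cases h : Sum.inl (some (Sum.inr i)) ∈ S
      · simp [hg, h]
      · have := (hleaf i).resolve_left h
        simp [hg, h, this]
    have hginj : Function.Injective g := by
      intro i j h
      simp only [hg] at h
      split_ifs at h with h1 h2 h2 <;> simp_all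
      exact fE_inj h
    obtain ⟨c, hcS, hcform⟩ :
        ∃ c, c ∈ S ∧ (c = Sum.inl none ∨ ∃ j, c = Sum.inr (eE n j)) := by
      rcases hcenter with h | ⟨j, h⟩
      · exact ⟨_, h, Or.inl rfl⟩
      · exact ⟨_, h, Or.inr ⟨j, rfl⟩⟩
    have hcg : ∀ i, c ≠ g i := by
      intro i hci
      rcases hcform with rfl | ⟨j, rfl⟩ <;> by_cases h : Sum.inl (some (Sum.inr i)) ∈ S <;>
        simp [hg, h] at hci
      exact eE_ne_fE j i hci
    let F : Option (Fin n) → S := fun o =>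
      match o with
      | none => ⟨c, hcS⟩
      | some i => ⟨g i, hgS i⟩
    have hFinj : Function.Injective F := by
      intro a b hab
      match a, b with
      | none, none => rfl
      | none, some i => exact absurd (congrArg Subtype.val hab) (hcg i)
      | some i, none => exact absurd (congrArg Subtype.val hab).symm (hcg i)
      | some i, some j => exact congrArg some (hginj (Subtype.ext_iff.mp hab))
    have h2 : Nat.card (Option (Fin n)) = n + 1 := by simp
    rw [← Nat.card_coe_set_eq, ← h2]
    exact Nat.card_le_card_of_injective F hFinj
  exact le_antisymm (Nat.sInf_le hmem) (le_csInf ⟨_, hmem⟩ hlb)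
end

section
/- For any path graph P_n of order n ≥ 2, γ(M(P_n)) = ⌈n/2⌉, where γ denotes the domination number. -/
/-- The `i`-th edge of the path graph. -/
def pathEdge {n : ℕ} (i : ℕ) (h : i + 1 < n) : (SimpleGraph.pathGraph n).edgeSet :=
  ⟨s(⟨i, Nat.lt_of_succ_lt h⟩, ⟨i + 1, h⟩), by
    rw [SimpleGraph.mem_edgeSet, SimpleGraph.pathGraph_adj]; left; rfl⟩

lemma pathEdge_spec {n : ℕ} (e : (SimpleGraph.pathGraph n).edgeSet) :
    ∃ (i : ℕ) (h : i + 1 < n), e = pathEdge i h := by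
  obtain ⟨e, he⟩ := e
  induction e using Sym2.ind with
  | _ u v =>
    rw [SimpleGraph.mem_edgeSet, SimpleGraph.pathGraph_adj] at he
    rcases he with h | h
    · refine ⟨u.val, by omega, ?_⟩
      apply Subtype.ext
      simp only [pathEdge]
      rw [Sym2.eq_iff]; left; exact ⟨Fin.ext rfl, Fin.ext h.symm⟩
    · refine ⟨v.val, by omega, ?_⟩
      apply Subtype.ext
      simp only [pathEdge]
      rw [Sym2.eq_iff]; right
      exact ⟨Fin.ext h.symm, Fin.ext rfl⟩

lemma mem_pathEdge_iff {n : ℕ} {i : ℕ} {h : i + 1 < n} {j : Fin n} :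
    j ∈ ((pathEdge i h : (SimpleGraph.pathGraph n).edgeSet) : Sym2 (Fin n)) ↔
      (j.val = i ∨ j.val = i + 1) := by
  simp only [pathEdge, Sym2.mem_iff]
  constructor
  · rintro (rfl | rfl) <;> simp
  · rintro (hj | hj) <;> [left; right] <;> exact Fin.ext hj


/-- The dominating set of the middle graph of the path, as a function. -/
noncomputable def domFun (n : ℕ) (k : Fin ((n + 1) / 2)) :
    Fin n ⊕ (SimpleGraph.pathGraph n).edgeSet :=
  if h : 2 * k.val + 1 < n then Sum.inr (pathEdge (2 * k.val) h)
  else Sum.inl ⟨n - 1, by have := k.isLt; omega⟩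

lemma domFun_inj (n : ℕ) : Function.Injective (domFun n) := by
  intro a b hab
  have ha := a.isLt; have hb := b.isLt
  unfold domFun at hab
  split_ifs at hab with h1 h2 h2
  · have h' := Subtype.ext_iff.mp (Sum.inr.inj hab)
    simp only [pathEdge, Sym2.eq_iff, Fin.mk.injEq] at h'
    exact Fin.ext (by omega)
  · exact Fin.ext (by omega)

lemma domFun_isDom (n : ℕ) (hn : 2 ≤ n) :
    IsDomSet (middleGraph (SimpleGraph.pathGraph n)) (Set.range (domFun n)) := by
  rintro (j | e)
  · -- vertex case
    have hj := j.isLt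
    rcases Nat.even_or_odd j.val with he | ho
    · obtain ⟨c, hc⟩ := he
      by_cases hlt : j.val + 1 < n
      · right
        refine ⟨domFun n ⟨j.val / 2, by omega⟩, Set.mem_range_self _, ?_⟩
        have h2k : 2 * ((⟨j.val / 2, by omega⟩ : Fin ((n + 1) / 2)).val) + 1 < n := by
          show 2 * (j.val / 2) + 1 < n; omega
        show (middleGraph (SimpleGraph.pathGraph n)).Adj _ _
        rw [domFun, dif_pos h2k]
        show j ∈ ((pathEdge _ h2k : (SimpleGraph.pathGraph n).edgeSet) : Sym2 (Fin n))
        rw [mem_pathEdge_iff]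
        left; show j.val = 2 * (j.val / 2); omega
      · left
        refine ⟨⟨j.val / 2, by omega⟩, ?_⟩
        have h2k : ¬ (2 * ((⟨j.val / 2, by omega⟩ : Fin ((n + 1) / 2)).val) + 1 < n) := by
          show ¬ (2 * (j.val / 2) + 1 < n); omega
        rw [domFun, dif_neg h2k]
        exact congrArg Sum.inl (Fin.ext (by show n - 1 = j.val; omega))
    · obtain ⟨c, hc⟩ := ho
      right
      refine ⟨domFun n ⟨j.val / 2, by omega⟩, Set.mem_range_self _, ?_⟩
      have h2k : 2 * ((⟨j.val / 2, by omega⟩ : Fin ((n + 1) / 2)).val) + 1 < n := by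
        show 2 * (j.val / 2) + 1 < n; omega
      show (middleGraph (SimpleGraph.pathGraph n)).Adj _ _
      rw [domFun, dif_pos h2k]
      show j ∈ ((pathEdge _ h2k : (SimpleGraph.pathGraph n).edgeSet) : Sym2 (Fin n))
      rw [mem_pathEdge_iff]
      right; show j.val = 2 * (j.val / 2) + 1; omega
  · -- edge case
    obtain ⟨i, hi, rfl⟩ := pathEdge_spec e
    rcases Nat.even_or_odd i with he | ho
    · left
      obtain ⟨c, hc⟩ := he
      have hci : i = 2 * c := by omega
      subst hci
      refine ⟨⟨c, by omega⟩, ?_⟩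
      have h2k : 2 * ((⟨c, by omega⟩ : Fin ((n + 1) / 2)).val) + 1 < n := by
        show 2 * c + 1 < n; omega
      rw [domFun, dif_pos h2k]
    · right
      obtain ⟨c, hc⟩ := ho
      subst hc
      refine ⟨domFun n ⟨c, by omega⟩, Set.mem_range_self _, ?_⟩
      have h2k : 2 * ((⟨c, by omega⟩ : Fin ((n + 1) / 2)).val) + 1 < n := by
        show 2 * c + 1 < n; omega
      show (middleGraph (SimpleGraph.pathGraph n)).Adj _ _
      rw [domFun, dif_pos h2k]
      refine ⟨?_, ⟨⟨2 * c + 1, by omega⟩, ?_, ?_⟩⟩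
      · intro hcontra
        have h' := Subtype.ext_iff.mp hcontra
        simp only [pathEdge, Sym2.eq_iff, Fin.mk.injEq] at h'
        omega
      · rw [mem_pathEdge_iff]; exact Or.inl rfl
      · rw [mem_pathEdge_iff]; exact Or.inr rfl

/-- For the path graph `P_n` of order `n ≥ 2`, `γ(M(P_n)) = ⌈n/2⌉`. -/
theorem domNum_middle_path (n : ℕ) (hn : 2 ≤ n) :
    domNum (middleGraph (SimpleGraph.pathGraph n)) = (n + 1) / 2 := by
  apply le_antisymm
  · apply Nat.sInf_le
    refine ⟨Set.range (domFun n), domFun_isDom n hn, ?_⟩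
    rw [← Nat.card_coe_set_eq, Nat.card_range_of_injective (domFun_inj n),
      Nat.card_eq_fintype_card, Fintype.card_fin]
  · apply le_csInf
    · exact ⟨(Set.univ : Set (Fin n ⊕ (SimpleGraph.pathGraph n).edgeSet)).ncard,
        Set.univ, fun v => Or.inl (Set.mem_univ v), rfl⟩
    · rintro k ⟨S, hS, rfl⟩
      have hex : ∀ m : Fin ((n + 1) / 2), ∃ s, s ∈ S ∧
          (s = Sum.inl (⟨2 * m.val, by have := m.isLt; omega⟩ : Fin n) ∨
           ∃ e : (SimpleGraph.pathGraph n).edgeSet, s = Sum.inr e ∧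
             (⟨2 * m.val, by have := m.isLt; omega⟩ : Fin n) ∈ (e : Sym2 (Fin n))) := by
        intro m
        rcases hS (Sum.inl ⟨2 * m.val, by have := m.isLt; omega⟩) with h | ⟨s, hsS, hadj⟩
        · exact ⟨_, h, Or.inl rfl⟩
        · cases s with
          | inl w => exact hadj.elim
          | inr e => exact ⟨Sum.inr e, hsS, Or.inr ⟨e, rfl, hadj⟩⟩
      choose f hfS hfP using hex
      have hinj : Function.Injective f := by
        intro a b hfe
        have pa := hfP a; have pb := hfP b
        rw [hfe] at pa
        rcases pa with ha | ⟨e, he, hme⟩ <;> rcases pb with hb | ⟨e', he', hme'⟩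
        · have h1 := Sum.inl.inj (ha.symm.trans hb)
          have h2 : 2 * a.val = 2 * b.val := Fin.val_eq_val _ _ |>.mpr h1
          exact Fin.ext (by omega)
        · exact (Sum.inl_ne_inr (ha.symm.trans he')).elim
        · exact (Sum.inr_ne_inl (he.symm.trans hb)).elim
        · have hee : e = e' := Sum.inr.inj (he.symm.trans he')
          subst hee
          obtain ⟨i, hi, rfl⟩ := pathEdge_spec e
          rw [mem_pathEdge_iff] at hme hme'
          have h2a : 2 * a.val = i ∨ 2 * a.val = i + 1 := hme
          have h2b : 2 * b.val = i ∨ 2 * b.val = i + 1 := hme'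
          exact Fin.ext (by omega)
      have : (n + 1) / 2 = Nat.card (Fin ((n + 1) / 2)) := by simp
      rw [this, ← Nat.card_coe_set_eq]
      exact Nat.card_le_card_of_injective (fun m => (⟨f m, hfS m⟩ : S))
        (fun a b hab => hinj (Subtype.ext_iff.mp hab))
end

section
/- Let G be a finite simple graph on n ≥ 2 vertices. If G contains a subgraph isomorphic to the path P_n on all n vertices (i.e., G has a Hamiltonian path), then γ(M(G)) = ⌈n/2⌉, where γ denotes the domination number. -/
/-- If a graph `G` on `n ≥ 2` vertices has a Hamiltonian path, then
`γ(M(G)) = ⌈n/2⌉`. -/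
theorem domNum_middle_of_hamiltonian_path {V : Type*} [Fintype V] [DecidableEq V]
    (G : SimpleGraph V) (n : ℕ) (hord : Fintype.card V = n) (hn : 2 ≤ n)
    (hham : ∃ (u v : V) (P : G.Walk u v), P.IsHamiltonian) :
    domNum (middleGraph G) = (n + 1) / 2 := by
  classical
  obtain ⟨u, v, P, hP⟩ := hham
  have hlen : P.length = n - 1 := by rw [hP.length_eq, hord]
  -- the key "cover by vertices" property of a candidate set
  -- Upper bound construction
  set m := (n + 1) / 2 with hm
  have hedge : ∀ i : ℕ, i < P.length → s(P.getVert i, P.getVert (i+1)) ∈ G.edgeSet :=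
    fun i hi => (P.adj_getVert_succ hi)
  let f : Fin m → (V ⊕ G.edgeSet) := fun i =>
    if h : 2 * (i : ℕ) + 1 ≤ P.length then
      Sum.inr ⟨s(P.getVert (2 * i), P.getVert (2 * i + 1)), hedge _ (by omega)⟩
    else Sum.inl (P.getVert (2 * i))
  set S : Set (V ⊕ G.edgeSet) := Set.range f with hS
  -- Claim A: every vertex is "covered" by S
  have claimA : ∀ w : V, (Sum.inl w ∈ S) ∨
      ∃ e : G.edgeSet, Sum.inr e ∈ S ∧ w ∈ (e : Sym2 V) := by
    intro w
    obtain ⟨j, hjw, hj⟩ := SimpleGraph.Walk.mem_support_iff_exists_getVert.mp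
      (hP.mem_support w)
    have him : j / 2 < m := by omega
    by_cases h : 2 * (j / 2) + 1 ≤ P.length
    · right
      refine ⟨⟨s(P.getVert (2 * (j/2)), P.getVert (2 * (j/2) + 1)), hedge _ (by omega)⟩,
        ⟨⟨j/2, him⟩, by simp [f, show 2 * (j/2) < P.length by omega]⟩, ?_⟩
      show w ∈ s(P.getVert (2 * (j/2)), P.getVert (2 * (j/2) + 1))
      rw [Sym2.mem_iff]
      have : j = 2 * (j/2) ∨ j = 2 * (j/2) + 1 := by omega
      rcases this with h' | h'
      · exact Or.inl (hjw ▸ congrArg P.getVert h').symm.symm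
      · exact Or.inr (hjw ▸ congrArg P.getVert h').symm.symm
    · left
      have hj2 : j = 2 * (j / 2) := by omega
      refine ⟨⟨j/2, him⟩, ?_⟩
      show f ⟨j/2, him⟩ = Sum.inl w
      simp only [f, dif_neg h]
      rw [← hj2, hjw]
  -- S is a dominating set
  have hdom : IsDomSet (middleGraph G) S := by
    rintro (w | e)
    · rcases claimA w with h | ⟨e, he, hwe⟩
      · exact Or.inl h
      · exact Or.inr ⟨Sum.inr e, he, hwe⟩
    · obtain ⟨a, ha⟩ : ∃ a, a ∈ (e : Sym2 V) := by
        induction (e : Sym2 V) using Sym2.ind with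
        | _ x y => exact ⟨x, by simp⟩
      rcases claimA a with h | ⟨e', he', hae'⟩
      · exact Or.inr ⟨Sum.inl a, h, ha⟩
      · by_cases hee : e = e'
        · exact Or.inl (hee ▸ he')
        · exact Or.inr ⟨Sum.inr e', he', hee, a, ha, hae'⟩
  have hcard : S.ncard ≤ m := by
    have : S = ↑(Finset.univ.image f) := by
      rw [hS]; ext x; simp [Set.mem_range]
    rw [this, Set.ncard_coe_finset]
    exact (Finset.card_image_le).trans (by simp)
  have hub : domNum (middleGraph G) ≤ m :=
    le_trans (Nat.sInf_le ⟨S, hdom, rfl⟩) hcard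
  -- Lower bound
  have hne : {k : ℕ | ∃ S : Set (V ⊕ G.edgeSet), IsDomSet (middleGraph G) S ∧ S.ncard = k}.Nonempty :=
    ⟨S.ncard, S, hdom, rfl⟩
  obtain ⟨T, hT, hTcard⟩ := Nat.sInf_mem hne
  have hlb : m ≤ domNum (middleGraph G) := by
    haveI : Fintype (V ⊕ G.edgeSet) := Fintype.ofFinite _
    -- choose a dominator for each vertex
    have hch : ∀ w : V, ∃ s ∈ T, Sum.inl w = s ∨ (middleGraph G).Adj (Sum.inl w) s := by
      intro w
      rcases hT (Sum.inl w) with h | ⟨s, hs, hadj⟩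
      · exact ⟨Sum.inl w, h, Or.inl rfl⟩
      · exact ⟨s, hs, Or.inr hadj⟩
    choose g hgT hg using hch
    have hfib : ∀ s ∈ T.toFinset, (Finset.univ.filter fun w => g w = s).card ≤ 2 := by
      rintro (x | e) _
      · have hsub : (Finset.univ.filter fun w => g w = Sum.inl x) ⊆ {x} := by
          intro w hw
          simp only [Finset.mem_filter] at hw
          rcases hg w with h | h
          · simpa using Sum.inl.inj (h.trans hw.2)
          · rw [hw.2] at h; exact absurd h (by simp [middleGraph])
        exact le_trans (Finset.card_le_card hsub) (by simp)
      · obtain ⟨x, y, hxy⟩ : ∃ x y, (e : Sym2 V) = s(x, y) := by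
          induction (e : Sym2 V) using Sym2.ind with
          | _ x y => exact ⟨x, y, rfl⟩
        have hsub : (Finset.univ.filter fun w => g w = Sum.inr e) ⊆ {x, y} := by
          intro w hw
          simp only [Finset.mem_filter] at hw
          rcases hg w with h | h
          · exact absurd (h.trans hw.2) (by simp)
          · rw [hw.2] at h
            have hmem : w ∈ (e : Sym2 V) := h
            rw [hxy, Sym2.mem_iff] at hmem
            simpa using hmem
        refine le_trans (Finset.card_le_card hsub) ?_
        exact le_trans (Finset.card_insert_le _ _) (by simp)
    have hmaps : ∀ w ∈ (Finset.univ : Finset V), g w ∈ T.toFinset := by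
      intro w _; simpa using hgT w
    have hcount := Finset.card_le_mul_card_image_of_maps_to hmaps 2 hfib
    rw [Finset.card_univ, hord, ← Set.ncard_eq_toFinset_card' T] at hcount
    have hmT : m ≤ T.ncard := by omega
    exact hmT.trans_eq (hTcard.trans rfl)
  omega
end

section
/- Let G be a finite simple graph on n ≥ 2 vertices such that neither G nor its complement Ḡ has an isolated vertex. Then 2⌈n/2⌉ ≤ γ(M(G)) + γ(M(Ḡ)) ≤ 2(n − 2) and (⌈n/2⌉)² ≤ γ(M(G)) · γ(M(Ḡ)) ≤ (n − 2)², where γ denotes the domination number. -/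
lemma domNum_middle_le {V : Type*} [Fintype V] (H : SimpleGraph V) (c d e f : V)
    (h1 : H.Adj c d) (h2 : H.Adj e f) (hce : c ≠ e) (hcf : c ≠ f) (hde : d ≠ e) (hdf : d ≠ f) :
    domNum (middleGraph H) ≤ Fintype.card V - 2 := by
  classical
  set e1 : H.edgeSet := ⟨s(c, d), h1⟩ with he1
  set e2 : H.edgeSet := ⟨s(e, f), h2⟩ with he2
  set T : Set V := {v | v ≠ c ∧ v ≠ d ∧ v ≠ e ∧ v ≠ f} with hT
  set S : Set (V ⊕ H.edgeSet) :=
    {Sum.inr e1, Sum.inr e2} ∪ Sum.inl '' T with hSdef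
  have hmem1 : ∀ v : V, v ∈ (e1 : Sym2 V) ↔ (v = c ∨ v = d) := by
    intro v; simp [he1, Sym2.mem_iff]
  have hmem2 : ∀ v : V, v ∈ (e2 : Sym2 V) ↔ (v = e ∨ v = f) := by
    intro v; simp [he2, Sym2.mem_iff]
  have hdom : IsDomSet (middleGraph H) S := by
    rintro (v | ed)
    · by_cases hv : v ∈ T
      · exact Or.inl (Or.inr ⟨v, hv, rfl⟩)
      · simp only [hT, Set.mem_setOf_eq, not_and_or, not_not] at hv
        rcases hv with h | h | h | h
        · exact Or.inr ⟨Sum.inr e1, Or.inl (Or.inl rfl), (hmem1 v).2 (Or.inl h)⟩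
        · exact Or.inr ⟨Sum.inr e1, Or.inl (Or.inl rfl), (hmem1 v).2 (Or.inr h)⟩
        · exact Or.inr ⟨Sum.inr e2, Or.inl (Or.inr rfl), (hmem2 v).2 (Or.inl h)⟩
        · exact Or.inr ⟨Sum.inr e2, Or.inl (Or.inr rfl), (hmem2 v).2 (Or.inr h)⟩
    · obtain ⟨s2, hed⟩ := ed
      induction s2 using Sym2.ind with
      | _ x y =>
        have hx : x ∈ ((⟨s(x,y), hed⟩ : H.edgeSet) : Sym2 V) := by simp
        have hy : y ∈ ((⟨s(x,y), hed⟩ : H.edgeSet) : Sym2 V) := by simp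
        by_cases hxT : x ∈ T
        · exact Or.inr ⟨Sum.inl x, Or.inr ⟨x, hxT, rfl⟩, hx⟩
        by_cases hyT : y ∈ T
        · exact Or.inr ⟨Sum.inl y, Or.inr ⟨y, hyT, rfl⟩, hy⟩
        -- x ∈ {c,d,e,f}
        simp only [hT, Set.mem_setOf_eq, not_and_or, not_not] at hxT
        have key : ∀ (w : V) (E : H.edgeSet), w ∈ (E : Sym2 V) →
            w ∈ ((⟨s(x,y), hed⟩ : H.edgeSet) : Sym2 V) →
            Sum.inr E ∈ S → Sum.inr (⟨s(x,y), hed⟩ : H.edgeSet) ∈ S ∨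
              ∃ s ∈ S, (middleGraph H).Adj (Sum.inr ⟨s(x,y), hed⟩) s := by
          intro w E hwE hwx hES
          by_cases heq : (⟨s(x,y), hed⟩ : H.edgeSet) = E
          · exact Or.inl (heq ▸ hES)
          · exact Or.inr ⟨Sum.inr E, hES, ⟨heq, w, hwx, hwE⟩⟩
        rcases hxT with h | h | h | h
        · exact key x e1 ((hmem1 x).2 (Or.inl h)) hx (Or.inl (Or.inl rfl))
        · exact key x e1 ((hmem1 x).2 (Or.inr h)) hx (Or.inl (Or.inl rfl))
        · exact key x e2 ((hmem2 x).2 (Or.inl h)) hx (Or.inl (Or.inr rfl))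
        · exact key x e2 ((hmem2 x).2 (Or.inr h)) hx (Or.inl (Or.inr rfl))
  have hle : domNum (middleGraph H) ≤ S.ncard := Nat.sInf_le ⟨S, hdom, rfl⟩
  have hTcompl : T = ({c, d, e, f} : Set V)ᶜ := by
    ext v; simp [hT, not_or]
  have h4 : ({c, d, e, f} : Set V).ncard = 4 := by
    rw [Set.ncard_insert_of_notMem (by simp [hce, hcf, h1.ne]),
      Set.ncard_insert_of_notMem (by simp [hde, hdf]),
      Set.ncard_insert_of_notMem (by simp [h2.ne]), Set.ncard_singleton]
  have hcompl := Set.ncard_add_ncard_compl ({c, d, e, f} : Set V)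
  rw [h4] at hcompl
  have hNat : Nat.card V = Fintype.card V := Nat.card_eq_fintype_card
  have hTcard : T.ncard = Fintype.card V - 4 := by
    rw [hTcompl]; omega
  have hn4 : 4 ≤ Fintype.card V := by
    have : ({c, d, e, f} : Set V).ncard ≤ Nat.card V := Set.ncard_le_ncard (Set.subset_univ _)
      (Set.toFinite _) |>.trans (by rw [Set.ncard_univ])
    omega
  have hScard : S.ncard ≤ Fintype.card V - 2 := by
    calc S.ncard ≤ ({Sum.inr e1, Sum.inr e2} : Set (V ⊕ H.edgeSet)).ncard + (Sum.inl '' T).ncard :=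
          Set.ncard_union_le _ _
      _ ≤ 2 + T.ncard := by
          gcongr
          · exact (Set.ncard_insert_le _ _).trans (by simp)
          · exact Set.ncard_image_le
      _ ≤ Fintype.card V - 2 := by omega
  exact hle.trans hScard
lemma card_le_two_mul_domNum {V : Type*} [Fintype V] (H : SimpleGraph V) :
    Fintype.card V ≤ 2 * domNum (middleGraph H) := by
  classical
  have hne : {k : ℕ | ∃ S : Set (V ⊕ H.edgeSet), IsDomSet (middleGraph H) S ∧ S.ncard = k}.Nonempty :=
    ⟨(Set.univ : Set (V ⊕ H.edgeSet)).ncard, Set.univ, fun v => Or.inl trivial, rfl⟩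
  obtain ⟨S, hS, hcard⟩ := Nat.sInf_mem hne
  rw [domNum, ← hcard]
  have key : ∀ v : V, ∃ s ∈ S, s = Sum.inl v ∨
      ∃ e : H.edgeSet, s = Sum.inr e ∧ v ∈ (e : Sym2 V) := by
    intro v
    rcases hS (Sum.inl v) with h | ⟨s, hs, hadj⟩
    · exact ⟨_, h, Or.inl rfl⟩
    · rcases s with w | e
      · exact hadj.elim
      · exact ⟨Sum.inr e, hs, Or.inr ⟨e, rfl, hadj⟩⟩
  choose f hfS hfp using key
  have hSfin : S.Finite := Set.toFinite S
  have hmaps : ∀ v ∈ (Finset.univ : Finset V), f v ∈ hSfin.toFinset := by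
    intro v _; simpa using hfS v
  have hfib : ∀ s ∈ hSfin.toFinset,
      ({v ∈ (Finset.univ : Finset V) | f v = s}).card ≤ 2 := by
    rintro (w | e) _
    · have hsub : {v ∈ (Finset.univ : Finset V) | f v = Sum.inl w} ⊆ {w} := by
        intro v hv
        simp only [Finset.mem_filter, Finset.mem_univ, true_and] at hv
        rcases hfp v with h | ⟨e, he, _⟩
        · have := h ▸ hv; simp_all
        · simp [he] at hv
      calc _ ≤ ({w} : Finset V).card := Finset.card_le_card hsub
        _ ≤ 2 := by simp
    · obtain ⟨s2, he⟩ := e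
      induction s2 using Sym2.ind with
      | _ x y =>
        have hsub : {v ∈ (Finset.univ : Finset V) | f v = Sum.inr ⟨s(x, y), he⟩} ⊆ {x, y} := by
          intro v hv
          simp only [Finset.mem_filter, Finset.mem_univ, true_and] at hv
          rcases hfp v with h | ⟨e', he', hv'⟩
          · rw [hv] at h; exact absurd h (by simp)
          · rw [he'] at hv
            have : e' = ⟨s(x, y), he⟩ := Sum.inr_injective hv
            rw [this] at hv'
            simpa [Sym2.mem_iff, Finset.mem_insert] using hv'
        calc _ ≤ ({x, y} : Finset V).card := Finset.card_le_card hsub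
          _ ≤ 2 := Finset.card_insert_le _ _ |>.trans (by simp)
  have := Finset.card_le_mul_card_image_of_maps_to hmaps 2 hfib
  rw [Finset.card_univ] at this
  rwa [Set.ncard_eq_toFinset_card S hSfin]
lemma exists_two_disjoint_edges {V : Type*} (G : SimpleGraph V) [Nonempty V]
    (hisoG : ∀ v : V, ∃ w : V, G.Adj v w)
    (hisoGc : ∀ v : V, ∃ w : V, Gᶜ.Adj v w) :
    ∃ c d e f : V, G.Adj c d ∧ G.Adj e f ∧ c ≠ e ∧ c ≠ f ∧ d ≠ e ∧ d ≠ f := by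
  obtain ⟨a⟩ := ‹Nonempty V›
  obtain ⟨b, hab⟩ := hisoG a
  by_cases h : ∃ c d, G.Adj c d ∧ c ≠ a ∧ c ≠ b ∧ d ≠ a ∧ d ≠ b
  · obtain ⟨c, d, hcd, h1, h2, h3, h4⟩ := h
    exact ⟨a, b, c, d, hab, hcd, h1.symm, h3.symm, h2.symm, h4.symm⟩
  · push_neg at h
    obtain ⟨w, haw⟩ := hisoGc a
    rw [SimpleGraph.compl_adj] at haw
    obtain ⟨hwa, hnaw⟩ := haw
    have hwb : w ≠ b := fun hwb => hnaw (hwb ▸ hab)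
    obtain ⟨u, hwu⟩ := hisoG w
    have hub : u = b := by
      by_contra hub
      have hua : u ≠ a := fun hua => hnaw (hua ▸ hwu).symm
      exact hub (h w u hwu (Ne.symm hwa) hwb hua)
    obtain ⟨x, hbx⟩ := hisoGc b
    rw [SimpleGraph.compl_adj] at hbx
    obtain ⟨hxb, hnbx⟩ := hbx
    have hxa : x ≠ a := fun hxa => hnbx (hxa ▸ hab.symm)
    obtain ⟨u', hxu'⟩ := hisoG x
    have hua' : u' = a := by
      by_contra hua'
      have hub' : u' = b := h x u' hxu' hxa hxb.symm hua'
      exact hnbx (hub' ▸ hxu').symm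
    have hwx : w ≠ x := by
      intro hwx
      exact hnbx ((hwx ▸ (hub ▸ hwu)).symm)
    exact ⟨w, b, x, a, hub ▸ hwu, hua' ▸ hxu', hwx, Ne.symm hwa, hxb, hab.ne.symm⟩


/-- Nordhaus–Gaddum relations: if neither `G` nor its complement has an
isolated vertex (`n ≥ 2`), then
`2⌈n/2⌉ ≤ γ(M(G)) + γ(M(Ḡ)) ≤ 2(n - 2)` and
`⌈n/2⌉² ≤ γ(M(G)) · γ(M(Ḡ)) ≤ (n - 2)²`. -/
theorem domNum_middle_nordhaus_gaddum {V : Type*} [Fintype V] (G : SimpleGraph V) (n : ℕ)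
    (hord : Fintype.card V = n) (hn : 2 ≤ n)
    (hisoG : ∀ v : V, ∃ w : V, G.Adj v w)
    (hisoGc : ∀ v : V, ∃ w : V, Gᶜ.Adj v w) :
    (2 * ((n + 1) / 2) ≤ domNum (middleGraph G) + domNum (middleGraph Gᶜ) ∧
      domNum (middleGraph G) + domNum (middleGraph Gᶜ) ≤ 2 * (n - 2)) ∧
    (((n + 1) / 2) ^ 2 ≤ domNum (middleGraph G) * domNum (middleGraph Gᶜ) ∧
      domNum (middleGraph G) * domNum (middleGraph Gᶜ) ≤ (n - 2) ^ 2) := by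
  have hNE : Nonempty V := Fintype.card_pos_iff.mp (by omega)
  have hisoG' : ∀ v : V, ∃ w : V, Gᶜᶜ.Adj v w := by simpa using hisoG
  obtain ⟨c, d, e, f, h1, h2, hce, hcf, hde, hdf⟩ :=
    exists_two_disjoint_edges G hisoG hisoGc
  obtain ⟨c', d', e', f', h1', h2', hce', hcf', hde', hdf'⟩ :=
    exists_two_disjoint_edges Gᶜ hisoGc hisoG'
  have hA := card_le_two_mul_domNum G
  have hB := card_le_two_mul_domNum Gᶜ
  have hC := domNum_middle_le G c d e f h1 h2 hce hcf hde hdf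
  have hD := domNum_middle_le Gᶜ c' d' e' f' h1' h2' hce' hcf' hde' hdf'
  rw [hord] at hA hB hC hD
  have ha : (n + 1) / 2 ≤ domNum (middleGraph G) := by omega
  have hb : (n + 1) / 2 ≤ domNum (middleGraph Gᶜ) := by omega
  refine ⟨⟨by omega, by omega⟩, ?_, ?_⟩
  · rw [pow_two]; exact Nat.mul_le_mul ha hb
  · rw [pow_two]; exact Nat.mul_le_mul hC hD
end
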